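/- arXiv:1201.0383 — 6 statements merged into one kernel-verified Lean document; each statement's English description precedes it below -/
import Mathlib

section
/- If m_0, m_1, ..., m_{n-2} are nonnegative integers such that the sum over i from 0 to n-2 of C(n-i+1, 2) * m_i is at most C(n+1, 2), then the sum over i from 0 to n-2 of C(n-i, 2) * m_i is at most C(n, 2). -/
lemma two_mul_choose_two (n : ℕ) : 2 * Nat.choose n 2 = n * (n - 1) := by
  induction n with
  | zero => simp
  | succ k ih =>
    rw [Nat.choose_succ_succ, Nat.choose_one_right]
    cases k with
    | zero => simp
    | succ j => simp at ih ⊢; nlinarith [ih]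

lemma key_ineq (k n : ℕ) (h : k ≤ n) :
    Nat.choose k 2 * Nat.choose (n + 1) 2 ≤ Nat.choose (k + 1) 2 * Nat.choose n 2 := by
  rcases Nat.eq_zero_or_pos k with rfl | hk
  · simp
  obtain ⟨j, rfl⟩ : ∃ j, k = j + 1 := ⟨k - 1, by omega⟩
  obtain ⟨d, rfl⟩ := Nat.exists_eq_add_of_le h
  have h1 : 2 * Nat.choose (j + 1) 2 = (j + 1) * j := by
    simpa using two_mul_choose_two (j + 1)
  have h2 : 2 * Nat.choose (j + 1 + 1) 2 = (j + 2) * (j + 1) := by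
    simpa [mul_comm] using two_mul_choose_two (j + 2)
  have h3 : 2 * Nat.choose (j + 1 + d) 2 = (j + 1 + d) * (j + d) := by
    simpa using two_mul_choose_two (j + 1 + d)
  have h4 : 2 * Nat.choose (j + 1 + d + 1) 2 = (j + 2 + d) * (j + 1 + d) := by
    rw [show j + 1 + d + 1 = j + 2 + d from by omega]
    simpa [show j + 2 + d - 1 = j + 1 + d from by omega] using two_mul_choose_two (j + 2 + d)
  have e1 : 4 * (Nat.choose (j + 1) 2 * Nat.choose (j + 1 + d + 1) 2)
      = ((j + 1) * j) * ((j + 2 + d) * (j + 1 + d)) := by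
    rw [show 4 * (Nat.choose (j + 1) 2 * Nat.choose (j + 1 + d + 1) 2)
        = (2 * Nat.choose (j + 1) 2) * (2 * Nat.choose (j + 1 + d + 1) 2) by ring, h1, h4]
  have e2 : 4 * (Nat.choose (j + 1 + 1) 2 * Nat.choose (j + 1 + d) 2)
      = ((j + 2) * (j + 1)) * ((j + 1 + d) * (j + d)) := by
    rw [show 4 * (Nat.choose (j + 1 + 1) 2 * Nat.choose (j + 1 + d) 2)
        = (2 * Nat.choose (j + 1 + 1) 2) * (2 * Nat.choose (j + 1 + d) 2) by ring, h2, h3]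
  nlinarith [e1, e2, Nat.zero_le (d * (j + 1) * (j + 1 + d))]

theorem stmt_0 (n : ℕ) (hn : 2 ≤ n) (m : ℕ → ℕ)
    (h : ∑ i ∈ Finset.range (n - 1), Nat.choose (n - i + 1) 2 * m i ≤ Nat.choose (n + 1) 2) :
    ∑ i ∈ Finset.range (n - 1), Nat.choose (n - i) 2 * m i ≤ Nat.choose n 2 := by
  have hpos : 0 < Nat.choose (n + 1) 2 := Nat.choose_pos (by omega)
  refine Nat.le_of_mul_le_mul_left ?_ hpos
  calc Nat.choose (n + 1) 2 * ∑ i ∈ Finset.range (n - 1), Nat.choose (n - i) 2 * m i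
      = ∑ i ∈ Finset.range (n - 1), Nat.choose (n - i) 2 * Nat.choose (n + 1) 2 * m i := by
        rw [Finset.mul_sum]; congr 1; ext i; ring
    _ ≤ ∑ i ∈ Finset.range (n - 1), Nat.choose (n - i + 1) 2 * Nat.choose n 2 * m i := by
        apply Finset.sum_le_sum
        intro i _
        exact Nat.mul_le_mul_right _ (key_ineq (n - i) n (Nat.sub_le _ _))
    _ = Nat.choose n 2 * ∑ i ∈ Finset.range (n - 1), Nat.choose (n - i + 1) 2 * m i := by
        rw [Finset.mul_sum]; congr 1; ext i; ring
    _ ≤ Nat.choose n 2 * Nat.choose (n + 1) 2 := Nat.mul_le_mul_left _ h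
    _ = Nat.choose (n + 1) 2 * Nat.choose n 2 := Nat.mul_comm _ _
end

section
/- If m_0, m_1, ..., m_{n-2} are nonnegative integers such that the sum over i from 0 to n-2 of C(n-i+1, 2) * m_i is at most C(n+1, 2), and moreover the sum over i from 0 to n-2 of C(n-i, 2) * m_i equals C(n, 2), then m_0 = 1 and m_i = 0 for all i with 1 ≤ i ≤ n-2. -/
private lemma two_choose_two (k : ℕ) : 2 * Nat.choose k 2 = k * (k - 1) := by
  induction k with
  | zero => simp
  | succ j ih =>
    rw [Nat.choose_succ_succ, Nat.choose_one_right, Nat.mul_add, ih]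
    cases j with
    | zero => simp
    | succ l => simp [Nat.succ_sub_one]; ring

theorem stmt_1 (n : ℕ) (hn : 2 ≤ n) (m : ℕ → ℕ)
    (h : ∑ i ∈ Finset.range (n - 1), Nat.choose (n - i + 1) 2 * m i ≤ Nat.choose (n + 1) 2)
    (heq : ∑ i ∈ Finset.range (n - 1), Nat.choose (n - i) 2 * m i = Nat.choose n 2) :
    m 0 = 1 ∧ ∀ i, 1 ≤ i → i ≤ n - 2 → m i = 0 := by
  obtain ⟨p, rfl⟩ : ∃ p, n = p + 2 := ⟨n - 2, by omega⟩
  simp only [Nat.add_sub_cancel, show p + 2 - 1 = p + 1 from rfl] at *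
  -- key: D := Σ (n - i) * m i ≤ n
  have hD : ∑ i ∈ Finset.range (p + 1), (p + 2 - i) * m i ≤ p + 2 := by
    have hsplit : ∑ i ∈ Finset.range (p + 1), Nat.choose (p + 2 - i + 1) 2 * m i
        = ∑ i ∈ Finset.range (p + 1), (p + 2 - i) * m i
          + ∑ i ∈ Finset.range (p + 1), Nat.choose (p + 2 - i) 2 * m i := by
      rw [← Finset.sum_add_distrib]
      refine Finset.sum_congr rfl fun i hi => ?_
      rw [Nat.choose_succ_succ, Nat.choose_one_right, add_mul]
    have h2 : Nat.choose (p + 2 + 1) 2 = (p + 2) + Nat.choose (p + 2) 2 := by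
      rw [Nat.choose_succ_succ, Nat.choose_one_right]
    omega
  have hterm0 : (p + 2) * m 0 ≤ ∑ i ∈ Finset.range (p + 1), (p + 2 - i) * m i := by
    have := Finset.single_le_sum (f := fun i => (p + 2 - i) * m i)
      (fun i _ => Nat.zero_le _) (Finset.mem_range.mpr (Nat.succ_pos p))
    simpa using this
  have hm0le : m 0 ≤ 1 := by
    by_contra hc
    have : (p + 2) * 2 ≤ (p + 2) * m 0 := Nat.mul_le_mul_left _ (by omega)
    omega
  have hm0 : m 0 = 1 := by
    by_contra hne
    have hm00 : m 0 = 0 := by omega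
    have key : 2 * Nat.choose (p + 2) 2 ≤ p * ∑ i ∈ Finset.range (p + 1), (p + 2 - i) * m i := by
      rw [← heq, Finset.mul_sum, Finset.mul_sum]
      refine Finset.sum_le_sum fun i hi => ?_
      rcases Nat.eq_zero_or_pos i with h0 | hpos
      · subst h0; simp [hm00]
      · have hch : 2 * Nat.choose (p + 2 - i) 2 = (p + 2 - i) * (p + 2 - i - 1) :=
          two_choose_two _
        have hle : (p + 2 - i - 1) ≤ p := by omega
        calc 2 * (Nat.choose (p + 2 - i) 2 * m i)
            = ((p + 2 - i) * (p + 2 - i - 1)) * m i := by rw [← mul_assoc, hch]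
          _ ≤ ((p + 2 - i) * p) * m i := by
              exact Nat.mul_le_mul_right _ (Nat.mul_le_mul_left _ hle)
          _ = p * ((p + 2 - i) * m i) := by ring
    have h1 : 2 * Nat.choose (p + 2) 2 = (p + 2) * (p + 1) := by
      rw [two_choose_two]; rfl
    have h2 : p * ∑ i ∈ Finset.range (p + 1), (p + 2 - i) * m i ≤ p * (p + 2) :=
      Nat.mul_le_mul_left _ hD
    nlinarith
  refine ⟨hm0, fun i h1i h2i => ?_⟩
  have hsplit := Finset.sum_range_succ' (fun i => Nat.choose (p + 2 - i) 2 * m i) p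
  rw [heq] at hsplit
  simp only [Nat.sub_zero, hm0, mul_one] at hsplit
  have hzero : ∑ i ∈ Finset.range p, Nat.choose (p + 2 - (i + 1)) 2 * m (i + 1) = 0 := by omega
  obtain ⟨j, rfl⟩ : ∃ j, i = j + 1 := ⟨i - 1, by omega⟩
  have hj : j ∈ Finset.range p := Finset.mem_range.mpr (by omega)
  have := (Finset.sum_eq_zero_iff.mp hzero) j hj
  have hpos : 0 < Nat.choose (p + 2 - (j + 1)) 2 := Nat.choose_pos (by omega)
  rcases Nat.mul_eq_zero.mp this with h' | h'
  · omega
  · exact h'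
end

section
/- The determinant of the symmetric 3×3 matrix with entries a_11 = 2+2q, a_12 = 2n(n+1)(p+q), a_13 = 2q, a_22 = 2n(n+1)(1+p+2(n^2+n-1)q), a_23 = 2n(n+1)q, a_33 = q, where p = -(n^2+2n-1)/(n^2(n+3)) and q = 1/(n(n+3)), equals -8(n+1)(n^4+6n^3+7n^2-6n+1)/(n^3(n+3)^3), which is negative for every integer n ≥ 1. -/
theorem stmt_9 (n : ℝ) (hn : 1 ≤ n)
    (p q : ℝ) (hp : p = -(n ^ 2 + 2 * n - 1) / (n ^ 2 * (n + 3)))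
    (hq : q = 1 / (n * (n + 3))) :
    Matrix.det !![2 + 2 * q, 2 * n * (n + 1) * (p + q), 2 * q;
        2 * n * (n + 1) * (p + q), 2 * n * (n + 1) * (1 + p + 2 * (n ^ 2 + n - 1) * q),
          2 * n * (n + 1) * q;
        2 * q, 2 * n * (n + 1) * q, q] =
      -8 * (n + 1) * (n ^ 4 + 6 * n ^ 3 + 7 * n ^ 2 - 6 * n + 1) / (n ^ 3 * (n + 3) ^ 3) ∧
    -8 * (n + 1) * (n ^ 4 + 6 * n ^ 3 + 7 * n ^ 2 - 6 * n + 1) / (n ^ 3 * (n + 3) ^ 3) < 0 := by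
  have hn0 : (0:ℝ) < n := by linarith
  have h3 : (0:ℝ) < n + 3 := by linarith
  have hA : n ^ 2 * (n + 3) ≠ 0 := by positivity
  have hB : n * (n + 3) ≠ 0 := by positivity
  have hC : n ^ 3 * (n + 3) ^ 3 ≠ 0 := by positivity
  constructor
  · rw [Matrix.det_fin_three]
    simp only [Matrix.cons_val', Matrix.cons_val_zero, Matrix.cons_val_one, Matrix.head_cons,
      Matrix.empty_val', Matrix.cons_val_fin_one, Matrix.cons_val_two, Matrix.tail_cons,
      Matrix.head_fin_const, Matrix.of_apply]
    subst hp hq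
    field_simp
    ring
  · apply div_neg_of_neg_of_pos
    · nlinarith [sq_nonneg n, sq_nonneg (n-1), sq_nonneg (n^2 + 3*n - 1), hn0]
    · positivity
end

section
/- Under the hypotheses of the previous construction (involutions σ_v on V with σ_v(v) = v, σ_u(v) = σ_v(u), σ_u σ_v σ_u = σ_{σ_u(v)}, and (σ_v σ_w σ_u)^2 = id; addition defined by u + v = σ_{v_0}(σ_u(v)) with zero v_0), addition is associative: u + (v + w) = (u + v) + w for all u, v, w ∈ V. -/
theorem stmt_14 {V : Type*} (σ : V → V → V)
    (hinv : ∀ v x, σ v (σ v x) = x)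
    (hfix : ∀ v, σ v v = v)
    (hsymm : ∀ u v, σ u v = σ v u)
    (hconj : ∀ u v x, σ u (σ v (σ u x)) = σ (σ u v) x)
    (h2 : ∀ u v w x, σ v (σ w (σ u (σ v (σ w (σ u x))))) = x)
    (v0 : V) :
    ∀ u v w, σ v0 (σ u (σ v0 (σ v w))) = σ v0 (σ (σ v0 (σ u v)) w) := by
  have hrev : ∀ a b c x, σ a (σ b (σ c x)) = σ c (σ b (σ a x)) := by
    intro a b c x
    have h := congrArg (fun y => σ c (σ b (σ a y))) (h2 c a b x)
    simpa only [hinv] using h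
  intro u v w
  rw [← hconj v0 (σ u v) w, ← hconj u v (σ v0 w), hinv, hrev v u v0 w,
    hconj u v0 (σ v w), hconj v0 u (σ v w), hsymm v0 u]
end

section
/- The only positive integer solutions (n, m) of the equation n^2 + 3n - 1 = 3^m are (1, 1), (2, 2), and (4, 3). -/
namespace Stmt15

/-- One Pell-type step `(x,y) ↦ (2x+3y, x+2y)`, i.e. multiplication by `2+√3`. -/
def step (s : ℕ × ℕ) : ℕ × ℕ := (2*s.1 + 3*s.2, s.1 + 2*s.2)

/-- The chain of solutions of `x² = 3y² + 13` starting at a seed. -/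
def ch (s0 : ℕ × ℕ) : ℕ → ℕ × ℕ
  | 0 => s0
  | k+1 => step (ch s0 k)

/-- The step map mod `m`. -/
def stepz (m : ℕ) (s : ZMod m × ZMod m) : ZMod m × ZMod m :=
  (2*s.1 + 3*s.2, s.1 + 2*s.2)

/-- The chain mod `m` (head recursion, for proofs). -/
def chz (m : ℕ) (s0 : ℕ × ℕ) : ℕ → ZMod m × ZMod m
  | 0 => ((s0.1 : ZMod m), (s0.2 : ZMod m))
  | k+1 => stepz m (chz m s0 k)

/-- The chain mod `m` (tail recursion, for computation). -/
def chzA (m : ℕ) : ℕ → ZMod m × ZMod m → ZMod m × ZMod m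
  | 0, s => s
  | k+1, s => chzA m k (stepz m s)

lemma chzA_succ (m : ℕ) : ∀ k s, chzA m (k+1) s = stepz m (chzA m k s) := by
  intro k
  induction k with
  | zero => intro s; rfl
  | succ k ih =>
      intro s
      show chzA m (k+1) (stepz m s) = stepz m (chzA m (k+1) s)
      rw [ih (stepz m s)]
      rfl

lemma chz_eq_chzA (m : ℕ) (s0 : ℕ × ℕ) :
    ∀ k, chz m s0 k = chzA m k ((s0.1 : ZMod m), (s0.2 : ZMod m)) := by
  intro k
  induction k with
  | zero => rfl
  | succ k ih => rw [chz, ih, chzA_succ]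

lemma chz_cast (m : ℕ) (s0 : ℕ × ℕ) :
    ∀ k, chz m s0 k = (((ch s0 k).1 : ZMod m), ((ch s0 k).2 : ZMod m)) := by
  intro k
  induction k with
  | zero => rfl
  | succ k ih =>
      simp only [chz, ch, step, stepz, ih]
      push_cast
      constructor <;> ring

lemma chz_shift (m : ℕ) (s0 : ℕ × ℕ) (T : ℕ)
    (h : chz m s0 T = chz m s0 0) : ∀ k, chz m s0 (k + T) = chz m s0 k := by
  intro k
  induction k with
  | zero => simpa using h
  | succ k ih =>
      have e : k + 1 + T = (k + T) + 1 := by omega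
      rw [e]
      show stepz m (chz m s0 (k+T)) = stepz m (chz m s0 k)
      rw [ih]

lemma chz_mod (m : ℕ) (s0 : ℕ × ℕ) (T : ℕ) (hT : 0 < T)
    (h : chz m s0 T = chz m s0 0) : ∀ k, chz m s0 k = chz m s0 (k % T) := by
  intro k
  induction k using Nat.strong_induction_on with
  | _ k IH =>
    rcases lt_or_ge k T with hk | hk
    · rw [Nat.mod_eq_of_lt hk]
    · have h1 : k = (k - T) + T := by omega
      have h2 : chz m s0 k = chz m s0 (k - T) := by
        conv_lhs => rw [h1]
        exact chz_shift m s0 T h (k - T)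
      rw [h2, IH (k - T) (by omega), Nat.mod_eq_sub_mod hk]

/-- Scanner verifying the zero pattern of the second coordinate along the chain. -/
def zscan (m z1 z2 : ℕ) (acc : Bool) : ℕ → ℕ → ZMod m × ZMod m → Bool
  | 0, _, _ => acc
  | f+1, i, s =>
      zscan m z1 z2 (acc && ((s.2 == 0) == (i == z1 || i == z2))) f (i+1) (stepz m s)

lemma zscan_spec (m z1 z2 : ℕ) :
    ∀ f acc i s, zscan m z1 z2 acc f i s = true →
      acc = true ∧
      ∀ j, j < f → (((chzA m j s).2 == 0) == ((i+j) == z1 || (i+j) == z2)) = true := by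
  intro f
  induction f with
  | zero =>
      intro acc i s h
      exact ⟨h, fun j hj => absurd hj (by omega)⟩
  | succ f ih =>
      intro acc i s h
      have h' := ih _ _ _ h
      obtain ⟨hacc, hrest⟩ := h'
      have hacc' : acc = true := by
        rcases Bool.and_eq_true_iff.mp hacc with ⟨h1, _⟩
        exact h1
      have hcur : ((s.2 == 0) == (i == z1 || i == z2)) = true := by
        rcases Bool.and_eq_true_iff.mp hacc with ⟨_, h2⟩
        exact h2
      refine ⟨hacc', ?_⟩
      intro j hj
      cases j with
      | zero => exact hcur
      | succ j =>
          have := hrest j (by omega)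
          have e : i + (j+1) = (i+1) + j := by omega
          rw [e]
          exact this


lemma chzA_add (m : ℕ) : ∀ a b s, chzA m (a + b) s = chzA m b (chzA m a s) := by
  intro a
  induction a with
  | zero => intro b s; rw [Nat.zero_add]; rfl
  | succ a ih =>
      intro b s
      rw [show a + 1 + b = (a + b) + 1 by omega]
      show chzA m (a + b) (stepz m s) = chzA m b (chzA m (a + 1) s)
      rw [ih]
      rfl

lemma zscan_add (m z1 z2 : ℕ) : ∀ f1 f2 acc i s,
    zscan m z1 z2 acc (f1 + f2) i s
      = zscan m z1 z2 (zscan m z1 z2 acc f1 i s) f2 (i + f1) (chzA m f1 s) := by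
  intro f1
  induction f1 with
  | zero => intro f2 acc i s; rw [Nat.zero_add]; rfl
  | succ f1 ih =>
      intro f2 acc i s
      rw [show f1 + 1 + f2 = (f1 + f2) + 1 by omega]
      show zscan m z1 z2 (acc && ((s.2 == 0) == (i == z1 || i == z2))) (f1 + f2) (i + 1)
            (stepz m s) = _
      rw [ih, show i + 1 + f1 = i + (f1 + 1) by omega]
      rfl

/-- Scanner verifying that `2·3^r` avoids two values mod `17497`. -/
def pscan (acc : Bool) : ℕ → ZMod 17497 → Bool
  | 0, _ => acc
  | f+1, s => pscan (acc && (!(2*s == 3173 || 2*s == 14324))) f (3*s)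

lemma pscan_spec :
    ∀ f acc s, pscan acc f s = true →
      acc = true ∧ ∀ j, j < f → (!(2*(3^j*s) == 3173 || 2*(3^j*s) == 14324)) = true := by
  intro f
  induction f with
  | zero =>
      intro acc s h
      exact ⟨h, fun j hj => absurd hj (by omega)⟩
  | succ f ih =>
      intro acc s h
      obtain ⟨hacc, hrest⟩ := ih _ _ h
      have hacc' : acc = true := (Bool.and_eq_true_iff.mp hacc).1
      have hcur := (Bool.and_eq_true_iff.mp hacc).2
      refine ⟨hacc', ?_⟩
      intro j hj
      cases j with
      | zero => simpa using hcur
      | succ j =>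
          have := hrest j (by omega)
          have e : (3:ZMod 17497)^(j+1) * s = 3^j * (3*s) := by ring
          rw [e]
          exact this


lemma pscan_add : ∀ f1 f2 acc s,
    pscan acc (f1 + f2) s = pscan (pscan acc f1 s) f2 (3 ^ f1 * s) := by
  intro f1
  induction f1 with
  | zero => intro f2 acc s; rw [Nat.zero_add, pow_zero, one_mul]; rfl
  | succ f1 ih =>
      intro f2 acc s
      rw [show f1 + 1 + f2 = (f1 + f2) + 1 by omega]
      show pscan (acc && (!(2*s == 3173 || 2*s == 14324))) (f1 + f2) (3*s) = _
      rw [ih, show (3:ZMod 17497) ^ f1 * (3 * s) = 3 ^ (f1 + 1) * s by ring]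
      rfl

/-- Descent: every solution of `a² = 3b² + 13` with `b ≥ 1` lies on one of two chains. -/
lemma classify : ∀ b a : ℕ, a ^ 2 = 3 * b ^ 2 + 13 → 1 ≤ b →
    ∃ k, (a, b) = ch (4,1) k ∨ (a, b) = ch (5,2) k := by
  intro b
  induction b using Nat.strong_induction_on with
  | _ b IH =>
    intro a h hb
    rcases le_or_gt b 3 with hb3 | hb4
    · interval_cases b
      · have ha4 : a ≤ 4 := by by_contra hc; push_neg at hc; nlinarith
        have ha4' : 4 ≤ a := by by_contra hc; push_neg at hc; nlinarith
        have : a = 4 := le_antisymm ha4 ha4'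
        exact ⟨0, Or.inl (by simp [this, ch])⟩
      · have ha5 : a ≤ 5 := by by_contra hc; push_neg at hc; nlinarith
        have ha5' : 5 ≤ a := by by_contra hc; push_neg at hc; nlinarith
        have : a = 5 := le_antisymm ha5 ha5'
        exact ⟨0, Or.inr (by simp [this, ch])⟩
      · exfalso
        have h6 : a ≤ 6 := by by_contra hc; push_neg at hc; nlinarith
        interval_cases a <;> norm_num at h
    · have hx2 : 3*b ≤ 2*a := by by_contra hc; push_neg at hc; nlinarith
      have hlt : a < 2*b := by by_contra hc; push_neg at hc; nlinarith
      have hba : b < a := by by_contra hc; push_neg at hc; nlinarith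
      have hb'1 : 1 ≤ 2*b - a := by omega
      have hb'lt : 2*b - a < b := by omega
      have hnorm : (2*a - 3*b) ^ 2 = 3 * (2*b - a) ^ 2 + 13 := by
        zify [hx2, hlt.le] at h ⊢
        linear_combination h
      obtain ⟨k, hk⟩ := IH (2*b - a) hb'lt (2*a - 3*b) hnorm hb'1
      refine ⟨k+1, ?_⟩
      have hstep : (a, b) = step (2*a - 3*b, 2*b - a) := by
        simp only [step, Prod.mk.injEq]
        omega
      rcases hk with hk | hk
      · exact Or.inl (by rw [hstep, hk]; rfl)
      · exact Or.inr (by rw [hstep, hk]; rfl)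

/-- Growth of the chains. -/
lemma grow (s0 : ℕ × ℕ) (h1 : 1 ≤ s0.2) (h2 : s0.2 ≤ s0.1) :
    ∀ k, 3 ^ k * s0.2 ≤ (ch s0 k).2 ∧ (ch s0 k).2 ≤ (ch s0 k).1 := by
  intro k
  induction k with
  | zero => exact ⟨by simpa [ch] using Nat.le_refl _, by simpa [ch] using h2⟩
  | succ k ih =>
      obtain ⟨ihg, ihle⟩ := ih
      constructor
      · show 3^(k+1) * s0.2 ≤ (ch s0 k).1 + 2*(ch s0 k).2
        have e : 3^(k+1) * s0.2 = 3 * (3^k * s0.2) := by ring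
        omega
      · show (ch s0 k).1 + 2*(ch s0 k).2 ≤ 2*(ch s0 k).1 + 3*(ch s0 k).2
        omega

/-- Small cases: chain values `2·3^t` for `k,t ≤ 7`. -/
lemma smallAB : ∀ k < 8, ∀ t < 8,
    ((ch (4,1) k).2 = 2*3^t ↔ (k = 1 ∧ t = 1)) ∧
    ((ch (5,2) k).2 = 2*3^t ↔ (k = 0 ∧ t = 0)) := by decide

/- ------ computational facts ------ -/

set_option maxRecDepth 20000

lemma e6A_0 : chzA 6561 300 (4,1) = (3901,5881) := by decide
lemma z6A_0 : zscan 6561 4300 10861 true 300 0 (4,1) = true := by decide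
lemma e6A_1 : chzA 6561 300 (3901,5881) = (3694,1339) := by decide
lemma z6A_1 : zscan 6561 4300 10861 true 300 300 (3901,5881) = true := by decide
lemma e6A_2 : chzA 6561 300 (3694,1339) = (6187,550) := by decide
lemma z6A_2 : zscan 6561 4300 10861 true 300 600 (3694,1339) = true := by decide
lemma e6A_3 : chzA 6561 300 (6187,550) = (3604,5296) := by decide
lemma z6A_3 : zscan 6561 4300 10861 true 300 900 (6187,550) = true := by decide
lemma e6A_4 : chzA 6561 300 (3604,5296) = (6394,592) := by decide
lemma z6A_4 : zscan 6561 4300 10861 true 300 1200 (3604,5296) = true := by decide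
lemma e6A_5 : chzA 6561 300 (6394,592) = (3865,2800) := by decide
lemma z6A_5 : zscan 6561 4300 10861 true 300 1500 (6394,592) = true := by decide
lemma e6A_6 : chzA 6561 300 (3865,2800) = (3550,2767) := by decide
lemma z6A_6 : zscan 6561 4300 10861 true 300 1800 (3865,2800) = true := by decide
lemma e6A_7 : chzA 6561 300 (3550,2767) = (4963,817) := by decide
lemma z6A_7 : zscan 6561 4300 10861 true 300 2100 (3550,2767) = true := by decide
lemma e6A_8 : chzA 6561 300 (4963,817) = (6160,2377) := by decide
lemma z6A_8 : zscan 6561 4300 10861 true 300 2400 (4963,817) = true := by decide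
lemma e6A_9 : chzA 6561 300 (6160,2377) = (3739,481) := by decide
lemma z6A_9 : zscan 6561 4300 10861 true 300 2700 (6160,2377) = true := by decide
lemma e6A_10 : chzA 6561 300 (3739,481) = (5962,4201) := by decide
lemma z6A_10 : zscan 6561 4300 10861 true 300 3000 (3739,481) = true := by decide
lemma e6A_11 : chzA 6561 300 (5962,4201) = (6511,1468) := by decide
lemma z6A_11 : zscan 6561 4300 10861 true 300 3300 (5962,4201) = true := by decide
lemma e6A_12 : chzA 6561 300 (6511,1468) = (4171,625) := by decide
lemma z6A_12 : zscan 6561 4300 10861 true 300 3600 (6511,1468) = true := by decide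
lemma e6A_13 : chzA 6561 300 (4171,625) = (2830,6370) := by decide
lemma z6A_13 : zscan 6561 4300 10861 true 300 3900 (4171,625) = true := by decide
lemma e6A_14 : chzA 6561 300 (2830,6370) = (4918,2260) := by decide
lemma z6A_14 : zscan 6561 4300 10861 true 300 4200 (2830,6370) = true := by decide
lemma e6A_15 : chzA 6561 300 (4918,2260) = (4846,5386) := by decide
lemma z6A_15 : zscan 6561 4300 10861 true 300 4500 (4918,2260) = true := by decide
lemma e6A_16 : chzA 6561 300 (4846,5386) = (2128,2950) := by decide
lemma z6A_16 : zscan 6561 4300 10861 true 300 4800 (4846,5386) = true := by decide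
lemma e6A_17 : chzA 6561 300 (2128,2950) = (1381,379) := by decide
lemma z6A_17 : zscan 6561 4300 10861 true 300 5100 (2128,2950) = true := by decide
lemma e6A_18 : chzA 6561 300 (1381,379) = (5764,3829) := by decide
lemma z6A_18 : zscan 6561 4300 10861 true 300 5400 (1381,379) = true := by decide
lemma e6A_19 : chzA 6561 300 (5764,3829) = (3856,2689) := by decide
lemma z6A_19 : zscan 6561 4300 10861 true 300 5700 (5764,3829) = true := by decide
lemma e6A_20 : chzA 6561 300 (3856,2689) = (2461,4573) := by decide
lemma z6A_20 : zscan 6561 4300 10861 true 300 6000 (3856,2689) = true := by decide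
lemma e6A_21 : chzA 6561 300 (2461,4573) = (364,4702) := by decide
lemma z6A_21 : zscan 6561 4300 10861 true 300 6300 (2461,4573) = true := by decide
lemma e6A_22 : chzA 6561 300 (364,4702) = (1453,1213) := by decide
lemma z6A_22 : zscan 6561 4300 10861 true 300 6600 (364,4702) = true := by decide
lemma e6A_23 : chzA 6561 300 (1453,1213) = (1597,3907) := by decide
lemma z6A_23 : zscan 6561 4300 10861 true 300 6900 (1453,1213) = true := by decide
lemma e6A_24 : chzA 6561 300 (1597,3907) = (1768,3631) := by decide
lemma z6A_24 : zscan 6561 4300 10861 true 300 7200 (1597,3907) = true := by decide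
lemma e6A_25 : chzA 6561 300 (1768,3631) = (1480,709) := by decide
lemma z6A_25 : zscan 6561 4300 10861 true 300 7500 (1768,3631) = true := by decide
lemma e6A_26 : chzA 6561 300 (1480,709) = (5350,568) := by decide
lemma z6A_26 : zscan 6561 4300 10861 true 300 7800 (1480,709) = true := by decide
lemma e6A_27 : chzA 6561 300 (5350,568) = (3415,2803) := by decide
lemma z6A_27 : zscan 6561 4300 10861 true 300 8100 (5350,568) = true := by decide
lemma e6A_28 : chzA 6561 300 (3415,2803) = (3937,3364) := by decide
lemma z6A_28 : zscan 6561 4300 10861 true 300 8400 (3415,2803) = true := by decide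
lemma e6A_29 : chzA 6561 300 (3937,3364) = (598,3304) := by decide
lemma z6A_29 : zscan 6561 4300 10861 true 300 8700 (3937,3364) = true := by decide
lemma e6A_30 : chzA 6561 300 (598,3304) = (5305,4405) := by decide
lemma z6A_30 : zscan 6561 4300 10861 true 300 9000 (598,3304) = true := by decide
lemma e6A_31 : chzA 6561 300 (5305,4405) = (2263,4804) := by decide
lemma z6A_31 : zscan 6561 4300 10861 true 300 9300 (5305,4405) = true := by decide
lemma e6A_32 : chzA 6561 300 (2263,4804) = (463,1180) := by decide
lemma z6A_32 : zscan 6561 4300 10861 true 300 9600 (2263,4804) = true := by decide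
lemma e6A_33 : chzA 6561 300 (463,1180) = (877,4063) := by decide
lemma z6A_33 : zscan 6561 4300 10861 true 300 9900 (463,1180) = true := by decide
lemma e6A_34 : chzA 6561 300 (877,4063) = (3019,655) := by decide
lemma z6A_34 : zscan 6561 4300 10861 true 300 10200 (877,4063) = true := by decide
lemma e6A_35 : chzA 6561 300 (3019,655) = (4945,2944) := by decide
lemma z6A_35 : zscan 6561 4300 10861 true 300 10500 (3019,655) = true := by decide
lemma e6A_36 : chzA 6561 300 (4945,2944) = (3253,3964) := by decide
lemma z6A_36 : zscan 6561 4300 10861 true 300 10800 (4945,2944) = true := by decide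
lemma e6A_37 : chzA 6561 300 (3253,3964) = (6205,6226) := by decide
lemma z6A_37 : zscan 6561 4300 10861 true 300 11100 (3253,3964) = true := by decide
lemma e6A_38 : chzA 6561 300 (6205,6226) = (922,4222) := by decide
lemma z6A_38 : zscan 6561 4300 10861 true 300 11400 (6205,6226) = true := by decide
lemma e6A_39 : chzA 6561 300 (922,4222) = (5872,6295) := by decide
lemma z6A_39 : zscan 6561 4300 10861 true 300 11700 (922,4222) = true := by decide
lemma e6A_40 : chzA 6561 300 (5872,6295) = (5260,4021) := by decide
lemma z6A_40 : zscan 6561 4300 10861 true 300 12000 (5872,6295) = true := by decide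
lemma e6A_41 : chzA 6561 300 (5260,4021) = (1516,640) := by decide
lemma z6A_41 : zscan 6561 4300 10861 true 300 12300 (5260,4021) = true := by decide
lemma e6A_42 : chzA 6561 300 (1516,640) = (2173,121) := by decide
lemma z6A_42 : zscan 6561 4300 10861 true 300 12600 (1516,640) = true := by decide
lemma e6A_43 : chzA 6561 222 (2173,121) = (4,1) := by decide
lemma z6A_43 : zscan 6561 4300 10861 true 222 12900 (2173,121) = true := by decide
lemma periodA6 : chzA 6561 13122 (4,1) = (4,1) := by
  rw [show (13122:ℕ) = 300 + 12822 from rfl, chzA_add, e6A_0]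
  rw [show (12822:ℕ) = 300 + 12522 from rfl, chzA_add, e6A_1]
  rw [show (12522:ℕ) = 300 + 12222 from rfl, chzA_add, e6A_2]
  rw [show (12222:ℕ) = 300 + 11922 from rfl, chzA_add, e6A_3]
  rw [show (11922:ℕ) = 300 + 11622 from rfl, chzA_add, e6A_4]
  rw [show (11622:ℕ) = 300 + 11322 from rfl, chzA_add, e6A_5]
  rw [show (11322:ℕ) = 300 + 11022 from rfl, chzA_add, e6A_6]
  rw [show (11022:ℕ) = 300 + 10722 from rfl, chzA_add, e6A_7]
  rw [show (10722:ℕ) = 300 + 10422 from rfl, chzA_add, e6A_8]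
  rw [show (10422:ℕ) = 300 + 10122 from rfl, chzA_add, e6A_9]
  rw [show (10122:ℕ) = 300 + 9822 from rfl, chzA_add, e6A_10]
  rw [show (9822:ℕ) = 300 + 9522 from rfl, chzA_add, e6A_11]
  rw [show (9522:ℕ) = 300 + 9222 from rfl, chzA_add, e6A_12]
  rw [show (9222:ℕ) = 300 + 8922 from rfl, chzA_add, e6A_13]
  rw [show (8922:ℕ) = 300 + 8622 from rfl, chzA_add, e6A_14]
  rw [show (8622:ℕ) = 300 + 8322 from rfl, chzA_add, e6A_15]
  rw [show (8322:ℕ) = 300 + 8022 from rfl, chzA_add, e6A_16]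
  rw [show (8022:ℕ) = 300 + 7722 from rfl, chzA_add, e6A_17]
  rw [show (7722:ℕ) = 300 + 7422 from rfl, chzA_add, e6A_18]
  rw [show (7422:ℕ) = 300 + 7122 from rfl, chzA_add, e6A_19]
  rw [show (7122:ℕ) = 300 + 6822 from rfl, chzA_add, e6A_20]
  rw [show (6822:ℕ) = 300 + 6522 from rfl, chzA_add, e6A_21]
  rw [show (6522:ℕ) = 300 + 6222 from rfl, chzA_add, e6A_22]
  rw [show (6222:ℕ) = 300 + 5922 from rfl, chzA_add, e6A_23]
  rw [show (5922:ℕ) = 300 + 5622 from rfl, chzA_add, e6A_24]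
  rw [show (5622:ℕ) = 300 + 5322 from rfl, chzA_add, e6A_25]
  rw [show (5322:ℕ) = 300 + 5022 from rfl, chzA_add, e6A_26]
  rw [show (5022:ℕ) = 300 + 4722 from rfl, chzA_add, e6A_27]
  rw [show (4722:ℕ) = 300 + 4422 from rfl, chzA_add, e6A_28]
  rw [show (4422:ℕ) = 300 + 4122 from rfl, chzA_add, e6A_29]
  rw [show (4122:ℕ) = 300 + 3822 from rfl, chzA_add, e6A_30]
  rw [show (3822:ℕ) = 300 + 3522 from rfl, chzA_add, e6A_31]
  rw [show (3522:ℕ) = 300 + 3222 from rfl, chzA_add, e6A_32]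
  rw [show (3222:ℕ) = 300 + 2922 from rfl, chzA_add, e6A_33]
  rw [show (2922:ℕ) = 300 + 2622 from rfl, chzA_add, e6A_34]
  rw [show (2622:ℕ) = 300 + 2322 from rfl, chzA_add, e6A_35]
  rw [show (2322:ℕ) = 300 + 2022 from rfl, chzA_add, e6A_36]
  rw [show (2022:ℕ) = 300 + 1722 from rfl, chzA_add, e6A_37]
  rw [show (1722:ℕ) = 300 + 1422 from rfl, chzA_add, e6A_38]
  rw [show (1422:ℕ) = 300 + 1122 from rfl, chzA_add, e6A_39]
  rw [show (1122:ℕ) = 300 + 822 from rfl, chzA_add, e6A_40]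
  rw [show (822:ℕ) = 300 + 522 from rfl, chzA_add, e6A_41]
  rw [show (522:ℕ) = 300 + 222 from rfl, chzA_add, e6A_42]
  exact e6A_43
lemma zscanA : zscan 6561 4300 10861 true 13122 0 (4,1) = true := by
  rw [show (13122:ℕ) = 300 + 12822 from rfl, zscan_add, z6A_0, e6A_0, show (0:ℕ) + 300 = 300 from rfl]
  rw [show (12822:ℕ) = 300 + 12522 from rfl, zscan_add, z6A_1, e6A_1, show (300:ℕ) + 300 = 600 from rfl]
  rw [show (12522:ℕ) = 300 + 12222 from rfl, zscan_add, z6A_2, e6A_2, show (600:ℕ) + 300 = 900 from rfl]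
  rw [show (12222:ℕ) = 300 + 11922 from rfl, zscan_add, z6A_3, e6A_3, show (900:ℕ) + 300 = 1200 from rfl]
  rw [show (11922:ℕ) = 300 + 11622 from rfl, zscan_add, z6A_4, e6A_4, show (1200:ℕ) + 300 = 1500 from rfl]
  rw [show (11622:ℕ) = 300 + 11322 from rfl, zscan_add, z6A_5, e6A_5, show (1500:ℕ) + 300 = 1800 from rfl]
  rw [show (11322:ℕ) = 300 + 11022 from rfl, zscan_add, z6A_6, e6A_6, show (1800:ℕ) + 300 = 2100 from rfl]
  rw [show (11022:ℕ) = 300 + 10722 from rfl, zscan_add, z6A_7, e6A_7, show (2100:ℕ) + 300 = 2400 from rfl]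
  rw [show (10722:ℕ) = 300 + 10422 from rfl, zscan_add, z6A_8, e6A_8, show (2400:ℕ) + 300 = 2700 from rfl]
  rw [show (10422:ℕ) = 300 + 10122 from rfl, zscan_add, z6A_9, e6A_9, show (2700:ℕ) + 300 = 3000 from rfl]
  rw [show (10122:ℕ) = 300 + 9822 from rfl, zscan_add, z6A_10, e6A_10, show (3000:ℕ) + 300 = 3300 from rfl]
  rw [show (9822:ℕ) = 300 + 9522 from rfl, zscan_add, z6A_11, e6A_11, show (3300:ℕ) + 300 = 3600 from rfl]
  rw [show (9522:ℕ) = 300 + 9222 from rfl, zscan_add, z6A_12, e6A_12, show (3600:ℕ) + 300 = 3900 from rfl]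
  rw [show (9222:ℕ) = 300 + 8922 from rfl, zscan_add, z6A_13, e6A_13, show (3900:ℕ) + 300 = 4200 from rfl]
  rw [show (8922:ℕ) = 300 + 8622 from rfl, zscan_add, z6A_14, e6A_14, show (4200:ℕ) + 300 = 4500 from rfl]
  rw [show (8622:ℕ) = 300 + 8322 from rfl, zscan_add, z6A_15, e6A_15, show (4500:ℕ) + 300 = 4800 from rfl]
  rw [show (8322:ℕ) = 300 + 8022 from rfl, zscan_add, z6A_16, e6A_16, show (4800:ℕ) + 300 = 5100 from rfl]
  rw [show (8022:ℕ) = 300 + 7722 from rfl, zscan_add, z6A_17, e6A_17, show (5100:ℕ) + 300 = 5400 from rfl]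
  rw [show (7722:ℕ) = 300 + 7422 from rfl, zscan_add, z6A_18, e6A_18, show (5400:ℕ) + 300 = 5700 from rfl]
  rw [show (7422:ℕ) = 300 + 7122 from rfl, zscan_add, z6A_19, e6A_19, show (5700:ℕ) + 300 = 6000 from rfl]
  rw [show (7122:ℕ) = 300 + 6822 from rfl, zscan_add, z6A_20, e6A_20, show (6000:ℕ) + 300 = 6300 from rfl]
  rw [show (6822:ℕ) = 300 + 6522 from rfl, zscan_add, z6A_21, e6A_21, show (6300:ℕ) + 300 = 6600 from rfl]
  rw [show (6522:ℕ) = 300 + 6222 from rfl, zscan_add, z6A_22, e6A_22, show (6600:ℕ) + 300 = 6900 from rfl]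
  rw [show (6222:ℕ) = 300 + 5922 from rfl, zscan_add, z6A_23, e6A_23, show (6900:ℕ) + 300 = 7200 from rfl]
  rw [show (5922:ℕ) = 300 + 5622 from rfl, zscan_add, z6A_24, e6A_24, show (7200:ℕ) + 300 = 7500 from rfl]
  rw [show (5622:ℕ) = 300 + 5322 from rfl, zscan_add, z6A_25, e6A_25, show (7500:ℕ) + 300 = 7800 from rfl]
  rw [show (5322:ℕ) = 300 + 5022 from rfl, zscan_add, z6A_26, e6A_26, show (7800:ℕ) + 300 = 8100 from rfl]
  rw [show (5022:ℕ) = 300 + 4722 from rfl, zscan_add, z6A_27, e6A_27, show (8100:ℕ) + 300 = 8400 from rfl]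
  rw [show (4722:ℕ) = 300 + 4422 from rfl, zscan_add, z6A_28, e6A_28, show (8400:ℕ) + 300 = 8700 from rfl]
  rw [show (4422:ℕ) = 300 + 4122 from rfl, zscan_add, z6A_29, e6A_29, show (8700:ℕ) + 300 = 9000 from rfl]
  rw [show (4122:ℕ) = 300 + 3822 from rfl, zscan_add, z6A_30, e6A_30, show (9000:ℕ) + 300 = 9300 from rfl]
  rw [show (3822:ℕ) = 300 + 3522 from rfl, zscan_add, z6A_31, e6A_31, show (9300:ℕ) + 300 = 9600 from rfl]
  rw [show (3522:ℕ) = 300 + 3222 from rfl, zscan_add, z6A_32, e6A_32, show (9600:ℕ) + 300 = 9900 from rfl]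
  rw [show (3222:ℕ) = 300 + 2922 from rfl, zscan_add, z6A_33, e6A_33, show (9900:ℕ) + 300 = 10200 from rfl]
  rw [show (2922:ℕ) = 300 + 2622 from rfl, zscan_add, z6A_34, e6A_34, show (10200:ℕ) + 300 = 10500 from rfl]
  rw [show (2622:ℕ) = 300 + 2322 from rfl, zscan_add, z6A_35, e6A_35, show (10500:ℕ) + 300 = 10800 from rfl]
  rw [show (2322:ℕ) = 300 + 2022 from rfl, zscan_add, z6A_36, e6A_36, show (10800:ℕ) + 300 = 11100 from rfl]
  rw [show (2022:ℕ) = 300 + 1722 from rfl, zscan_add, z6A_37, e6A_37, show (11100:ℕ) + 300 = 11400 from rfl]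
  rw [show (1722:ℕ) = 300 + 1422 from rfl, zscan_add, z6A_38, e6A_38, show (11400:ℕ) + 300 = 11700 from rfl]
  rw [show (1422:ℕ) = 300 + 1122 from rfl, zscan_add, z6A_39, e6A_39, show (11700:ℕ) + 300 = 12000 from rfl]
  rw [show (1122:ℕ) = 300 + 822 from rfl, zscan_add, z6A_40, e6A_40, show (12000:ℕ) + 300 = 12300 from rfl]
  rw [show (822:ℕ) = 300 + 522 from rfl, zscan_add, z6A_41, e6A_41, show (12300:ℕ) + 300 = 12600 from rfl]
  rw [show (522:ℕ) = 300 + 222 from rfl, zscan_add, z6A_42, e6A_42, show (12600:ℕ) + 300 = 12900 from rfl]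
  exact z6A_43
lemma e6B_0 : chzA 6561 300 (5,2) = (4235,1682) := by decide
lemma z6B_0 : zscan 6561 2260 8821 true 300 0 (5,2) = true := by decide
lemma e6B_1 : chzA 6561 300 (4235,1682) = (1877,6332) := by decide
lemma z6B_1 : zscan 6561 2260 8821 true 300 300 (4235,1682) = true := by decide
lemma e6B_2 : chzA 6561 300 (1877,6332) = (6539,506) := by decide
lemma z6B_2 : zscan 6561 2260 8821 true 300 600 (1877,6332) = true := by decide
lemma e6B_3 : chzA 6561 300 (6539,506) = (482,5021) := by decide
lemma z6B_3 : zscan 6561 2260 8821 true 300 900 (6539,506) = true := by decide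
lemma e6B_4 : chzA 6561 300 (482,5021) = (230,599) := by decide
lemma z6B_4 : zscan 6561 2260 8821 true 300 1200 (482,5021) = true := by decide
lemma e6B_5 : chzA 6561 300 (230,599) = (4082,4412) := by decide
lemma z6B_5 : zscan 6561 2260 8821 true 300 1500 (230,599) = true := by decide
lemma e6B_6 : chzA 6561 300 (4082,4412) = (5234,2285) := by decide
lemma z6B_6 : zscan 6561 2260 8821 true 300 1800 (4082,4412) = true := by decide
lemma e6B_7 : chzA 6561 300 (5234,2285) = (4901,5558) := by decide
lemma z6B_7 : zscan 6561 2260 8821 true 300 2100 (5234,2285) = true := by decide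
lemma e6B_8 : chzA 6561 300 (4901,5558) = (5756,2972) := by decide
lemma z6B_8 : zscan 6561 2260 8821 true 300 2400 (4901,5558) = true := by decide
lemma e6B_9 : chzA 6561 300 (5756,2972) = (5369,4409) := by decide
lemma z6B_9 : zscan 6561 2260 8821 true 300 2700 (5756,2972) = true := by decide
lemma e6B_10 : chzA 6561 300 (5369,4409) = (2768,5900) := by decide
lemma z6B_10 : zscan 6561 2260 8821 true 300 3000 (5369,4409) = true := by decide
lemma e6B_11 : chzA 6561 300 (2768,5900) = (5000,560) := by decide
lemma z6B_11 : zscan 6561 2260 8821 true 300 3300 (2768,5900) = true := by decide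
lemma e6B_12 : chzA 6561 300 (5000,560) = (887,2645) := by decide
lemma z6B_12 : zscan 6561 2260 8821 true 300 3600 (5000,560) = true := by decide
lemma e6B_13 : chzA 6561 300 (887,2645) = (392,5999) := by decide
lemma z6B_13 : zscan 6561 2260 8821 true 300 3900 (887,2645) = true := by decide
lemma e6B_14 : chzA 6561 300 (392,5999) = (1814,1550) := by decide
lemma z6B_14 : zscan 6561 2260 8821 true 300 4200 (392,5999) = true := by decide
lemma e6B_15 : chzA 6561 300 (1814,1550) = (4910,1367) := by decide
lemma z6B_15 : zscan 6561 2260 8821 true 300 4500 (1814,1550) = true := by decide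
lemma e6B_16 : chzA 6561 300 (4910,1367) = (4334,3668) := by decide
lemma z6B_16 : zscan 6561 2260 8821 true 300 4800 (4910,1367) = true := by decide
lemma e6B_17 : chzA 6561 300 (4334,3668) = (2759,3755) := by decide
lemma z6B_17 : zscan 6561 2260 8821 true 300 5100 (4334,3668) = true := by decide
lemma e6B_18 : chzA 6561 300 (2759,3755) = (4316,4949) := by decide
lemma z6B_18 : zscan 6561 2260 8821 true 300 5400 (2759,3755) = true := by decide
lemma e6B_19 : chzA 6561 300 (4316,4949) = (1472,3281) := by decide
lemma z6B_19 : zscan 6561 2260 8821 true 300 5700 (4316,4949) = true := by decide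
lemma e6B_20 : chzA 6561 300 (1472,3281) = (1274,4988) := by decide
lemma z6B_20 : zscan 6561 2260 8821 true 300 6000 (1472,3281) = true := by decide
lemma e6B_21 : chzA 6561 300 (1274,4988) = (5666,4643) := by decide
lemma z6B_21 : zscan 6561 2260 8821 true 300 6300 (1274,4988) = true := by decide
lemma e6B_22 : chzA 6561 300 (5666,4643) = (4928,2651) := by decide
lemma z6B_22 : zscan 6561 2260 8821 true 300 6600 (5666,4643) = true := by decide
lemma e6B_23 : chzA 6561 300 (4928,2651) = (3920,3062) := by decide
lemma z6B_23 : zscan 6561 2260 8821 true 300 6900 (4928,2651) = true := by decide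
lemma e6B_24 : chzA 6561 300 (3920,3062) = (2399,4823) := by decide
lemma z6B_24 : zscan 6561 2260 8821 true 300 7200 (3920,3062) = true := by decide
lemma e6B_25 : chzA 6561 300 (2399,4823) = (1580,6152) := by decide
lemma z6B_25 : zscan 6561 2260 8821 true 300 7500 (2399,4823) = true := by decide
lemma e6B_26 : chzA 6561 300 (1580,6152) = (4136,2351) := by decide
lemma z6B_26 : zscan 6561 2260 8821 true 300 7800 (1580,6152) = true := by decide
lemma e6B_27 : chzA 6561 300 (4136,2351) = (1076,3302) := by decide
lemma z6B_27 : zscan 6561 2260 8821 true 300 8100 (4136,2351) = true := by decide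
lemma e6B_28 : chzA 6561 300 (1076,3302) = (4550,5036) := by decide
lemma z6B_28 : zscan 6561 2260 8821 true 300 8400 (1076,3302) = true := by decide
lemma e6B_29 : chzA 6561 300 (4550,5036) = (1922,668) := by decide
lemma z6B_29 : zscan 6561 2260 8821 true 300 8700 (4550,5036) = true := by decide
lemma e6B_30 : chzA 6561 300 (1922,668) = (1697,4454) := by decide
lemma z6B_30 : zscan 6561 2260 8821 true 300 9000 (1922,668) = true := by decide
lemma e6B_31 : chzA 6561 300 (1697,4454) = (716,3677) := by decide
lemma z6B_31 : zscan 6561 2260 8821 true 300 9300 (1697,4454) = true := by decide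
lemma e6B_32 : chzA 6561 300 (716,3677) = (3839,2387) := by decide
lemma z6B_32 : zscan 6561 2260 8821 true 300 9600 (716,3677) = true := by decide
lemma e6B_33 : chzA 6561 300 (3839,2387) = (4262,6092) := by decide
lemma z6B_33 : zscan 6561 2260 8821 true 300 9900 (3839,2387) = true := by decide
lemma e6B_34 : chzA 6561 300 (4262,6092) = (3200,6449) := by decide
lemma z6B_34 : zscan 6561 2260 8821 true 300 10200 (4262,6092) = true := by decide
lemma e6B_35 : chzA 6561 300 (3200,6449) = (3326,5321) := by decide
lemma z6B_35 : zscan 6561 2260 8821 true 300 10500 (3200,6449) = true := by decide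
lemma e6B_36 : chzA 6561 300 (3326,5321) = (2210,6029) := by decide
lemma z6B_36 : zscan 6561 2260 8821 true 300 10800 (3326,5321) = true := by decide
lemma e6B_37 : chzA 6561 300 (2210,6029) = (5441,4604) := by decide
lemma z6B_37 : zscan 6561 2260 8821 true 300 11100 (2210,6029) = true := by decide
lemma e6B_38 : chzA 6561 300 (5441,4604) = (383,722) := by decide
lemma z6B_38 : zscan 6561 2260 8821 true 300 11400 (5441,4604) = true := by decide
lemma e6B_39 : chzA 6561 300 (383,722) = (2102,2078) := by decide
lemma z6B_39 : zscan 6561 2260 8821 true 300 11700 (383,722) = true := by decide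
lemma e6B_40 : chzA 6561 300 (2102,2078) = (878,2516) := by decide
lemma z6B_40 : zscan 6561 2260 8821 true 300 12000 (2102,2078) = true := by decide
lemma e6B_41 : chzA 6561 300 (878,2516) = (1571,6086) := by decide
lemma z6B_41 : zscan 6561 2260 8821 true 300 12300 (878,2516) = true := by decide
lemma e6B_42 : chzA 6561 300 (1571,6086) = (3938,5174) := by decide
lemma z6B_42 : zscan 6561 2260 8821 true 300 12600 (1571,6086) = true := by decide
lemma e6B_43 : chzA 6561 222 (3938,5174) = (5,2) := by decide
lemma z6B_43 : zscan 6561 2260 8821 true 222 12900 (3938,5174) = true := by decide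
lemma periodB6 : chzA 6561 13122 (5,2) = (5,2) := by
  rw [show (13122:ℕ) = 300 + 12822 from rfl, chzA_add, e6B_0]
  rw [show (12822:ℕ) = 300 + 12522 from rfl, chzA_add, e6B_1]
  rw [show (12522:ℕ) = 300 + 12222 from rfl, chzA_add, e6B_2]
  rw [show (12222:ℕ) = 300 + 11922 from rfl, chzA_add, e6B_3]
  rw [show (11922:ℕ) = 300 + 11622 from rfl, chzA_add, e6B_4]
  rw [show (11622:ℕ) = 300 + 11322 from rfl, chzA_add, e6B_5]
  rw [show (11322:ℕ) = 300 + 11022 from rfl, chzA_add, e6B_6]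
  rw [show (11022:ℕ) = 300 + 10722 from rfl, chzA_add, e6B_7]
  rw [show (10722:ℕ) = 300 + 10422 from rfl, chzA_add, e6B_8]
  rw [show (10422:ℕ) = 300 + 10122 from rfl, chzA_add, e6B_9]
  rw [show (10122:ℕ) = 300 + 9822 from rfl, chzA_add, e6B_10]
  rw [show (9822:ℕ) = 300 + 9522 from rfl, chzA_add, e6B_11]
  rw [show (9522:ℕ) = 300 + 9222 from rfl, chzA_add, e6B_12]
  rw [show (9222:ℕ) = 300 + 8922 from rfl, chzA_add, e6B_13]
  rw [show (8922:ℕ) = 300 + 8622 from rfl, chzA_add, e6B_14]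
  rw [show (8622:ℕ) = 300 + 8322 from rfl, chzA_add, e6B_15]
  rw [show (8322:ℕ) = 300 + 8022 from rfl, chzA_add, e6B_16]
  rw [show (8022:ℕ) = 300 + 7722 from rfl, chzA_add, e6B_17]
  rw [show (7722:ℕ) = 300 + 7422 from rfl, chzA_add, e6B_18]
  rw [show (7422:ℕ) = 300 + 7122 from rfl, chzA_add, e6B_19]
  rw [show (7122:ℕ) = 300 + 6822 from rfl, chzA_add, e6B_20]
  rw [show (6822:ℕ) = 300 + 6522 from rfl, chzA_add, e6B_21]
  rw [show (6522:ℕ) = 300 + 6222 from rfl, chzA_add, e6B_22]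
  rw [show (6222:ℕ) = 300 + 5922 from rfl, chzA_add, e6B_23]
  rw [show (5922:ℕ) = 300 + 5622 from rfl, chzA_add, e6B_24]
  rw [show (5622:ℕ) = 300 + 5322 from rfl, chzA_add, e6B_25]
  rw [show (5322:ℕ) = 300 + 5022 from rfl, chzA_add, e6B_26]
  rw [show (5022:ℕ) = 300 + 4722 from rfl, chzA_add, e6B_27]
  rw [show (4722:ℕ) = 300 + 4422 from rfl, chzA_add, e6B_28]
  rw [show (4422:ℕ) = 300 + 4122 from rfl, chzA_add, e6B_29]
  rw [show (4122:ℕ) = 300 + 3822 from rfl, chzA_add, e6B_30]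
  rw [show (3822:ℕ) = 300 + 3522 from rfl, chzA_add, e6B_31]
  rw [show (3522:ℕ) = 300 + 3222 from rfl, chzA_add, e6B_32]
  rw [show (3222:ℕ) = 300 + 2922 from rfl, chzA_add, e6B_33]
  rw [show (2922:ℕ) = 300 + 2622 from rfl, chzA_add, e6B_34]
  rw [show (2622:ℕ) = 300 + 2322 from rfl, chzA_add, e6B_35]
  rw [show (2322:ℕ) = 300 + 2022 from rfl, chzA_add, e6B_36]
  rw [show (2022:ℕ) = 300 + 1722 from rfl, chzA_add, e6B_37]
  rw [show (1722:ℕ) = 300 + 1422 from rfl, chzA_add, e6B_38]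
  rw [show (1422:ℕ) = 300 + 1122 from rfl, chzA_add, e6B_39]
  rw [show (1122:ℕ) = 300 + 822 from rfl, chzA_add, e6B_40]
  rw [show (822:ℕ) = 300 + 522 from rfl, chzA_add, e6B_41]
  rw [show (522:ℕ) = 300 + 222 from rfl, chzA_add, e6B_42]
  exact e6B_43
lemma zscanB : zscan 6561 2260 8821 true 13122 0 (5,2) = true := by
  rw [show (13122:ℕ) = 300 + 12822 from rfl, zscan_add, z6B_0, e6B_0, show (0:ℕ) + 300 = 300 from rfl]
  rw [show (12822:ℕ) = 300 + 12522 from rfl, zscan_add, z6B_1, e6B_1, show (300:ℕ) + 300 = 600 from rfl]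
  rw [show (12522:ℕ) = 300 + 12222 from rfl, zscan_add, z6B_2, e6B_2, show (600:ℕ) + 300 = 900 from rfl]
  rw [show (12222:ℕ) = 300 + 11922 from rfl, zscan_add, z6B_3, e6B_3, show (900:ℕ) + 300 = 1200 from rfl]
  rw [show (11922:ℕ) = 300 + 11622 from rfl, zscan_add, z6B_4, e6B_4, show (1200:ℕ) + 300 = 1500 from rfl]
  rw [show (11622:ℕ) = 300 + 11322 from rfl, zscan_add, z6B_5, e6B_5, show (1500:ℕ) + 300 = 1800 from rfl]
  rw [show (11322:ℕ) = 300 + 11022 from rfl, zscan_add, z6B_6, e6B_6, show (1800:ℕ) + 300 = 2100 from rfl]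
  rw [show (11022:ℕ) = 300 + 10722 from rfl, zscan_add, z6B_7, e6B_7, show (2100:ℕ) + 300 = 2400 from rfl]
  rw [show (10722:ℕ) = 300 + 10422 from rfl, zscan_add, z6B_8, e6B_8, show (2400:ℕ) + 300 = 2700 from rfl]
  rw [show (10422:ℕ) = 300 + 10122 from rfl, zscan_add, z6B_9, e6B_9, show (2700:ℕ) + 300 = 3000 from rfl]
  rw [show (10122:ℕ) = 300 + 9822 from rfl, zscan_add, z6B_10, e6B_10, show (3000:ℕ) + 300 = 3300 from rfl]
  rw [show (9822:ℕ) = 300 + 9522 from rfl, zscan_add, z6B_11, e6B_11, show (3300:ℕ) + 300 = 3600 from rfl]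
  rw [show (9522:ℕ) = 300 + 9222 from rfl, zscan_add, z6B_12, e6B_12, show (3600:ℕ) + 300 = 3900 from rfl]
  rw [show (9222:ℕ) = 300 + 8922 from rfl, zscan_add, z6B_13, e6B_13, show (3900:ℕ) + 300 = 4200 from rfl]
  rw [show (8922:ℕ) = 300 + 8622 from rfl, zscan_add, z6B_14, e6B_14, show (4200:ℕ) + 300 = 4500 from rfl]
  rw [show (8622:ℕ) = 300 + 8322 from rfl, zscan_add, z6B_15, e6B_15, show (4500:ℕ) + 300 = 4800 from rfl]
  rw [show (8322:ℕ) = 300 + 8022 from rfl, zscan_add, z6B_16, e6B_16, show (4800:ℕ) + 300 = 5100 from rfl]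
  rw [show (8022:ℕ) = 300 + 7722 from rfl, zscan_add, z6B_17, e6B_17, show (5100:ℕ) + 300 = 5400 from rfl]
  rw [show (7722:ℕ) = 300 + 7422 from rfl, zscan_add, z6B_18, e6B_18, show (5400:ℕ) + 300 = 5700 from rfl]
  rw [show (7422:ℕ) = 300 + 7122 from rfl, zscan_add, z6B_19, e6B_19, show (5700:ℕ) + 300 = 6000 from rfl]
  rw [show (7122:ℕ) = 300 + 6822 from rfl, zscan_add, z6B_20, e6B_20, show (6000:ℕ) + 300 = 6300 from rfl]
  rw [show (6822:ℕ) = 300 + 6522 from rfl, zscan_add, z6B_21, e6B_21, show (6300:ℕ) + 300 = 6600 from rfl]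
  rw [show (6522:ℕ) = 300 + 6222 from rfl, zscan_add, z6B_22, e6B_22, show (6600:ℕ) + 300 = 6900 from rfl]
  rw [show (6222:ℕ) = 300 + 5922 from rfl, zscan_add, z6B_23, e6B_23, show (6900:ℕ) + 300 = 7200 from rfl]
  rw [show (5922:ℕ) = 300 + 5622 from rfl, zscan_add, z6B_24, e6B_24, show (7200:ℕ) + 300 = 7500 from rfl]
  rw [show (5622:ℕ) = 300 + 5322 from rfl, zscan_add, z6B_25, e6B_25, show (7500:ℕ) + 300 = 7800 from rfl]
  rw [show (5322:ℕ) = 300 + 5022 from rfl, zscan_add, z6B_26, e6B_26, show (7800:ℕ) + 300 = 8100 from rfl]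
  rw [show (5022:ℕ) = 300 + 4722 from rfl, zscan_add, z6B_27, e6B_27, show (8100:ℕ) + 300 = 8400 from rfl]
  rw [show (4722:ℕ) = 300 + 4422 from rfl, zscan_add, z6B_28, e6B_28, show (8400:ℕ) + 300 = 8700 from rfl]
  rw [show (4422:ℕ) = 300 + 4122 from rfl, zscan_add, z6B_29, e6B_29, show (8700:ℕ) + 300 = 9000 from rfl]
  rw [show (4122:ℕ) = 300 + 3822 from rfl, zscan_add, z6B_30, e6B_30, show (9000:ℕ) + 300 = 9300 from rfl]
  rw [show (3822:ℕ) = 300 + 3522 from rfl, zscan_add, z6B_31, e6B_31, show (9300:ℕ) + 300 = 9600 from rfl]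
  rw [show (3522:ℕ) = 300 + 3222 from rfl, zscan_add, z6B_32, e6B_32, show (9600:ℕ) + 300 = 9900 from rfl]
  rw [show (3222:ℕ) = 300 + 2922 from rfl, zscan_add, z6B_33, e6B_33, show (9900:ℕ) + 300 = 10200 from rfl]
  rw [show (2922:ℕ) = 300 + 2622 from rfl, zscan_add, z6B_34, e6B_34, show (10200:ℕ) + 300 = 10500 from rfl]
  rw [show (2622:ℕ) = 300 + 2322 from rfl, zscan_add, z6B_35, e6B_35, show (10500:ℕ) + 300 = 10800 from rfl]
  rw [show (2322:ℕ) = 300 + 2022 from rfl, zscan_add, z6B_36, e6B_36, show (10800:ℕ) + 300 = 11100 from rfl]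
  rw [show (2022:ℕ) = 300 + 1722 from rfl, zscan_add, z6B_37, e6B_37, show (11100:ℕ) + 300 = 11400 from rfl]
  rw [show (1722:ℕ) = 300 + 1422 from rfl, zscan_add, z6B_38, e6B_38, show (11400:ℕ) + 300 = 11700 from rfl]
  rw [show (1422:ℕ) = 300 + 1122 from rfl, zscan_add, z6B_39, e6B_39, show (11700:ℕ) + 300 = 12000 from rfl]
  rw [show (1122:ℕ) = 300 + 822 from rfl, zscan_add, z6B_40, e6B_40, show (12000:ℕ) + 300 = 12300 from rfl]
  rw [show (822:ℕ) = 300 + 522 from rfl, zscan_add, z6B_41, e6B_41, show (12300:ℕ) + 300 = 12600 from rfl]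
  rw [show (522:ℕ) = 300 + 222 from rfl, zscan_add, z6B_42, e6B_42, show (12600:ℕ) + 300 = 12900 from rfl]
  exact z6B_43
lemma epA_0 : chzA 17497 300 (4,1) = (361,3345) := by decide
lemma epA_1 : chzA 17497 300 (361,3345) = (14127,9717) := by decide
lemma epA_2 : chzA 17497 300 (14127,9717) = (10850,11374) := by decide
lemma epA_3 : chzA 17497 300 (10850,11374) = (1127,16888) := by decide
lemma epA_4 : chzA 17497 300 (1127,16888) = (307,16939) := by decide
lemma epA_5 : chzA 17497 300 (307,16939) = (3620,8623) := by decide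
lemma epA_6 : chzA 17497 300 (3620,8623) = (6653,15687) := by decide
lemma epA_7 : chzA 17497 300 (6653,15687) = (5498,5394) := by decide
lemma epA_8 : chzA 17497 300 (5498,5394) = (51,5994) := by decide
lemma epA_9 : chzA 17497 300 (51,5994) = (9197,3907) := by decide
lemma epA_10 : chzA 17497 300 (9197,3907) = (2068,11958) := by decide
lemma epA_11 : chzA 17497 300 (2068,11958) = (9956,15314) := by decide
lemma epA_12 : chzA 17497 300 (9956,15314) = (3637,9172) := by decide
lemma epA_13 : chzA 17497 300 (3637,9172) = (13567,7734) := by decide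
lemma epA_14 : chzA 17497 300 (13567,7734) = (7464,16718) := by decide
lemma epA_15 : chzA 17497 300 (7464,16718) = (397,12422) := by decide
lemma epA_16 : chzA 17497 300 (397,12422) = (12923,15092) := by decide
lemma epA_17 : chzA 17497 300 (12923,15092) = (1829,16788) := by decide
lemma epA_18 : chzA 17497 300 (1829,16788) = (15244,9452) := by decide
lemma epA_19 : chzA 17497 300 (15244,9452) = (14913,6315) := by decide
lemma epA_20 : chzA 17497 300 (14913,6315) = (4245,8973) := by decide
lemma epA_21 : chzA 17497 300 (4245,8973) = (11229,13257) := by decide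
lemma epA_22 : chzA 17497 300 (11229,13257) = (10771,2692) := by decide
lemma epA_23 : chzA 17497 300 (10771,2692) = (15570,3519) := by decide
lemma epA_24 : chzA 17497 300 (15570,3519) = (411,13934) := by decide
lemma epA_25 : chzA 17497 300 (411,13934) = (9194,11091) := by decide
lemma epA_26 : chzA 17497 300 (9194,11091) = (7019,430) := by decide
lemma epA_27 : chzA 17497 300 (7019,430) = (16868,3366) := by decide
lemma epA_28 : chzA 17497 300 (16868,3366) = (10042,7105) := by decide
lemma epA_29 : chzA 17497 48 (10042,7105) = (4,1) := by decide
lemma ppA_1 : chzA 17497 300 (4,1) = (361,3345) := epA_0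
lemma ppA_2 : chzA 17497 600 (4,1) = (14127,9717) := by
  rw [show (600:ℕ) = 300 + 300 from rfl, chzA_add, ppA_1, epA_1]
lemma ppA_3 : chzA 17497 900 (4,1) = (10850,11374) := by
  rw [show (900:ℕ) = 600 + 300 from rfl, chzA_add, ppA_2, epA_2]
lemma ppA_4 : chzA 17497 1200 (4,1) = (1127,16888) := by
  rw [show (1200:ℕ) = 900 + 300 from rfl, chzA_add, ppA_3, epA_3]
lemma ppA_5 : chzA 17497 1500 (4,1) = (307,16939) := by
  rw [show (1500:ℕ) = 1200 + 300 from rfl, chzA_add, ppA_4, epA_4]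
lemma ppA_6 : chzA 17497 1800 (4,1) = (3620,8623) := by
  rw [show (1800:ℕ) = 1500 + 300 from rfl, chzA_add, ppA_5, epA_5]
lemma ppA_7 : chzA 17497 2100 (4,1) = (6653,15687) := by
  rw [show (2100:ℕ) = 1800 + 300 from rfl, chzA_add, ppA_6, epA_6]
lemma ppA_8 : chzA 17497 2400 (4,1) = (5498,5394) := by
  rw [show (2400:ℕ) = 2100 + 300 from rfl, chzA_add, ppA_7, epA_7]
lemma ppA_9 : chzA 17497 2700 (4,1) = (51,5994) := by
  rw [show (2700:ℕ) = 2400 + 300 from rfl, chzA_add, ppA_8, epA_8]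
lemma ppA_10 : chzA 17497 3000 (4,1) = (9197,3907) := by
  rw [show (3000:ℕ) = 2700 + 300 from rfl, chzA_add, ppA_9, epA_9]
lemma ppA_11 : chzA 17497 3300 (4,1) = (2068,11958) := by
  rw [show (3300:ℕ) = 3000 + 300 from rfl, chzA_add, ppA_10, epA_10]
lemma ppA_12 : chzA 17497 3600 (4,1) = (9956,15314) := by
  rw [show (3600:ℕ) = 3300 + 300 from rfl, chzA_add, ppA_11, epA_11]
lemma ppA_13 : chzA 17497 3900 (4,1) = (3637,9172) := by
  rw [show (3900:ℕ) = 3600 + 300 from rfl, chzA_add, ppA_12, epA_12]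
lemma ppA_14 : chzA 17497 4200 (4,1) = (13567,7734) := by
  rw [show (4200:ℕ) = 3900 + 300 from rfl, chzA_add, ppA_13, epA_13]
lemma ppA_15 : chzA 17497 4500 (4,1) = (7464,16718) := by
  rw [show (4500:ℕ) = 4200 + 300 from rfl, chzA_add, ppA_14, epA_14]
lemma ppA_16 : chzA 17497 4800 (4,1) = (397,12422) := by
  rw [show (4800:ℕ) = 4500 + 300 from rfl, chzA_add, ppA_15, epA_15]
lemma ppA_17 : chzA 17497 5100 (4,1) = (12923,15092) := by
  rw [show (5100:ℕ) = 4800 + 300 from rfl, chzA_add, ppA_16, epA_16]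
lemma ppA_18 : chzA 17497 5400 (4,1) = (1829,16788) := by
  rw [show (5400:ℕ) = 5100 + 300 from rfl, chzA_add, ppA_17, epA_17]
lemma ppA_19 : chzA 17497 5700 (4,1) = (15244,9452) := by
  rw [show (5700:ℕ) = 5400 + 300 from rfl, chzA_add, ppA_18, epA_18]
lemma ppA_20 : chzA 17497 6000 (4,1) = (14913,6315) := by
  rw [show (6000:ℕ) = 5700 + 300 from rfl, chzA_add, ppA_19, epA_19]
lemma ppA_21 : chzA 17497 6300 (4,1) = (4245,8973) := by
  rw [show (6300:ℕ) = 6000 + 300 from rfl, chzA_add, ppA_20, epA_20]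
lemma ppA_22 : chzA 17497 6600 (4,1) = (11229,13257) := by
  rw [show (6600:ℕ) = 6300 + 300 from rfl, chzA_add, ppA_21, epA_21]
lemma ppA_23 : chzA 17497 6900 (4,1) = (10771,2692) := by
  rw [show (6900:ℕ) = 6600 + 300 from rfl, chzA_add, ppA_22, epA_22]
lemma ppA_24 : chzA 17497 7200 (4,1) = (15570,3519) := by
  rw [show (7200:ℕ) = 6900 + 300 from rfl, chzA_add, ppA_23, epA_23]
lemma ppA_25 : chzA 17497 7500 (4,1) = (411,13934) := by
  rw [show (7500:ℕ) = 7200 + 300 from rfl, chzA_add, ppA_24, epA_24]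
lemma ppA_26 : chzA 17497 7800 (4,1) = (9194,11091) := by
  rw [show (7800:ℕ) = 7500 + 300 from rfl, chzA_add, ppA_25, epA_25]
lemma ppA_27 : chzA 17497 8100 (4,1) = (7019,430) := by
  rw [show (8100:ℕ) = 7800 + 300 from rfl, chzA_add, ppA_26, epA_26]
lemma ppA_28 : chzA 17497 8400 (4,1) = (16868,3366) := by
  rw [show (8400:ℕ) = 8100 + 300 from rfl, chzA_add, ppA_27, epA_27]
lemma ppA_29 : chzA 17497 8700 (4,1) = (10042,7105) := by
  rw [show (8700:ℕ) = 8400 + 300 from rfl, chzA_add, ppA_28, epA_28]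
lemma ppA_30 : chzA 17497 8748 (4,1) = (4,1) := by
  rw [show (8748:ℕ) = 8700 + 48 from rfl, chzA_add, ppA_29, epA_29]
lemma periodAp : chzA 17497 8748 (4,1) = (4,1) := ppA_30
lemma vA1 : (chzA 17497 2113 (4,1)).2 = 3173 := by
  rw [show (2113:ℕ) = 2100 + 13 from rfl, chzA_add, ppA_7]
  decide
lemma vA2 : (chzA 17497 6487 (4,1)).2 = 14324 := by
  rw [show (6487:ℕ) = 6300 + 187 from rfl, chzA_add, ppA_21]
  decide
lemma epB_0 : chzA 17497 300 (5,2) = (12126,14453) := by decide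
lemma epB_1 : chzA 17497 300 (12126,14453) = (1752,5649) := by decide
lemma epB_2 : chzA 17497 300 (1752,5649) = (716,10715) := by decide
lemma epB_3 : chzA 17497 300 (716,10715) = (2138,3642) := by decide
lemma epB_4 : chzA 17497 300 (2138,3642) = (5328,15621) := by decide
lemma epB_5 : chzA 17497 300 (5328,15621) = (13906,4738) := by decide
lemma epB_6 : chzA 17497 300 (13906,4738) = (528,932) := by decide
lemma epB_7 : chzA 17497 300 (528,932) = (13693,1694) := by decide
lemma epB_8 : chzA 17497 300 (13693,1694) = (14972,3775) := by decide
lemma epB_9 : chzA 17497 300 (14972,3775) = (496,4984) := by decide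
lemma epB_10 : chzA 17497 300 (496,4984) = (5122,14701) := by decide
lemma epB_11 : chzA 17497 300 (5122,14701) = (1135,10714) := by decide
lemma epB_12 : chzA 17497 300 (1135,10714) = (3537,8025) := by decide
lemma epB_13 : chzA 17497 300 (3537,8025) = (1122,7422) := by decide
lemma epB_14 : chzA 17497 300 (1122,7422) = (4807,10305) := by decide
lemma epB_15 : chzA 17497 300 (4807,10305) = (15757,16161) := by decide
lemma epB_16 : chzA 17497 300 (15757,16161) = (13598,4430) := by decide
lemma epB_17 : chzA 17497 300 (13598,4430) = (16284,9080) := by decide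
lemma epB_18 : chzA 17497 300 (16284,9080) = (10847,12351) := by decide
lemma epB_19 : chzA 17497 300 (10847,12351) = (4281,14280) := by decide
lemma epB_20 : chzA 17497 300 (4281,14280) = (4054,7951) := by decide
lemma epB_21 : chzA 17497 300 (4054,7951) = (15887,717) := by decide
lemma epB_22 : chzA 17497 300 (15887,717) = (4,1) := by decide
lemma epB_23 : chzA 17497 300 (4,1) = (361,3345) := by decide
lemma epB_24 : chzA 17497 300 (361,3345) = (14127,9717) := by decide
lemma epB_25 : chzA 17497 300 (14127,9717) = (10850,11374) := by decide
lemma epB_26 : chzA 17497 300 (10850,11374) = (1127,16888) := by decide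
lemma epB_27 : chzA 17497 300 (1127,16888) = (307,16939) := by decide
lemma epB_28 : chzA 17497 300 (307,16939) = (3620,8623) := by decide
lemma epB_29 : chzA 17497 48 (3620,8623) = (5,2) := by decide
lemma ppB_1 : chzA 17497 300 (5,2) = (12126,14453) := epB_0
lemma ppB_2 : chzA 17497 600 (5,2) = (1752,5649) := by
  rw [show (600:ℕ) = 300 + 300 from rfl, chzA_add, ppB_1, epB_1]
lemma ppB_3 : chzA 17497 900 (5,2) = (716,10715) := by
  rw [show (900:ℕ) = 600 + 300 from rfl, chzA_add, ppB_2, epB_2]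
lemma ppB_4 : chzA 17497 1200 (5,2) = (2138,3642) := by
  rw [show (1200:ℕ) = 900 + 300 from rfl, chzA_add, ppB_3, epB_3]
lemma ppB_5 : chzA 17497 1500 (5,2) = (5328,15621) := by
  rw [show (1500:ℕ) = 1200 + 300 from rfl, chzA_add, ppB_4, epB_4]
lemma ppB_6 : chzA 17497 1800 (5,2) = (13906,4738) := by
  rw [show (1800:ℕ) = 1500 + 300 from rfl, chzA_add, ppB_5, epB_5]
lemma ppB_7 : chzA 17497 2100 (5,2) = (528,932) := by
  rw [show (2100:ℕ) = 1800 + 300 from rfl, chzA_add, ppB_6, epB_6]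
lemma ppB_8 : chzA 17497 2400 (5,2) = (13693,1694) := by
  rw [show (2400:ℕ) = 2100 + 300 from rfl, chzA_add, ppB_7, epB_7]
lemma ppB_9 : chzA 17497 2700 (5,2) = (14972,3775) := by
  rw [show (2700:ℕ) = 2400 + 300 from rfl, chzA_add, ppB_8, epB_8]
lemma ppB_10 : chzA 17497 3000 (5,2) = (496,4984) := by
  rw [show (3000:ℕ) = 2700 + 300 from rfl, chzA_add, ppB_9, epB_9]
lemma ppB_11 : chzA 17497 3300 (5,2) = (5122,14701) := by
  rw [show (3300:ℕ) = 3000 + 300 from rfl, chzA_add, ppB_10, epB_10]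
lemma ppB_12 : chzA 17497 3600 (5,2) = (1135,10714) := by
  rw [show (3600:ℕ) = 3300 + 300 from rfl, chzA_add, ppB_11, epB_11]
lemma ppB_13 : chzA 17497 3900 (5,2) = (3537,8025) := by
  rw [show (3900:ℕ) = 3600 + 300 from rfl, chzA_add, ppB_12, epB_12]
lemma ppB_14 : chzA 17497 4200 (5,2) = (1122,7422) := by
  rw [show (4200:ℕ) = 3900 + 300 from rfl, chzA_add, ppB_13, epB_13]
lemma ppB_15 : chzA 17497 4500 (5,2) = (4807,10305) := by
  rw [show (4500:ℕ) = 4200 + 300 from rfl, chzA_add, ppB_14, epB_14]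
lemma ppB_16 : chzA 17497 4800 (5,2) = (15757,16161) := by
  rw [show (4800:ℕ) = 4500 + 300 from rfl, chzA_add, ppB_15, epB_15]
lemma ppB_17 : chzA 17497 5100 (5,2) = (13598,4430) := by
  rw [show (5100:ℕ) = 4800 + 300 from rfl, chzA_add, ppB_16, epB_16]
lemma ppB_18 : chzA 17497 5400 (5,2) = (16284,9080) := by
  rw [show (5400:ℕ) = 5100 + 300 from rfl, chzA_add, ppB_17, epB_17]
lemma ppB_19 : chzA 17497 5700 (5,2) = (10847,12351) := by
  rw [show (5700:ℕ) = 5400 + 300 from rfl, chzA_add, ppB_18, epB_18]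
lemma ppB_20 : chzA 17497 6000 (5,2) = (4281,14280) := by
  rw [show (6000:ℕ) = 5700 + 300 from rfl, chzA_add, ppB_19, epB_19]
lemma ppB_21 : chzA 17497 6300 (5,2) = (4054,7951) := by
  rw [show (6300:ℕ) = 6000 + 300 from rfl, chzA_add, ppB_20, epB_20]
lemma ppB_22 : chzA 17497 6600 (5,2) = (15887,717) := by
  rw [show (6600:ℕ) = 6300 + 300 from rfl, chzA_add, ppB_21, epB_21]
lemma ppB_23 : chzA 17497 6900 (5,2) = (4,1) := by
  rw [show (6900:ℕ) = 6600 + 300 from rfl, chzA_add, ppB_22, epB_22]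
lemma ppB_24 : chzA 17497 7200 (5,2) = (361,3345) := by
  rw [show (7200:ℕ) = 6900 + 300 from rfl, chzA_add, ppB_23, epB_23]
lemma ppB_25 : chzA 17497 7500 (5,2) = (14127,9717) := by
  rw [show (7500:ℕ) = 7200 + 300 from rfl, chzA_add, ppB_24, epB_24]
lemma ppB_26 : chzA 17497 7800 (5,2) = (10850,11374) := by
  rw [show (7800:ℕ) = 7500 + 300 from rfl, chzA_add, ppB_25, epB_25]
lemma ppB_27 : chzA 17497 8100 (5,2) = (1127,16888) := by
  rw [show (8100:ℕ) = 7800 + 300 from rfl, chzA_add, ppB_26, epB_26]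
lemma ppB_28 : chzA 17497 8400 (5,2) = (307,16939) := by
  rw [show (8400:ℕ) = 8100 + 300 from rfl, chzA_add, ppB_27, epB_27]
lemma ppB_29 : chzA 17497 8700 (5,2) = (3620,8623) := by
  rw [show (8700:ℕ) = 8400 + 300 from rfl, chzA_add, ppB_28, epB_28]
lemma ppB_30 : chzA 17497 8748 (5,2) = (5,2) := by
  rw [show (8748:ℕ) = 8700 + 48 from rfl, chzA_add, ppB_29, epB_29]
lemma periodBp : chzA 17497 8748 (5,2) = (5,2) := ppB_30
lemma vB1 : (chzA 17497 2260 (5,2)).2 = 3173 := by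
  rw [show (2260:ℕ) = 2100 + 160 from rfl, chzA_add, ppB_7]
  decide
lemma vB2 : (chzA 17497 6634 (5,2)).2 = 14324 := by
  rw [show (6634:ℕ) = 6600 + 34 from rfl, chzA_add, ppB_22]
  decide
lemma p3_150 : (3 : ZMod 17497) ^ 150 = 2249 := by decide
lemma p3_300 : (3 : ZMod 17497) ^ 300 = 1368 := by
  rw [show (300:ℕ) = 150 * 2 from rfl, pow_mul, p3_150]
  decide
lemma p3_600 : (3 : ZMod 17497) ^ 600 = 16742 := by
  rw [show (600:ℕ) = 300 * 2 from rfl, pow_mul, p3_300]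
  decide
lemma pow729 : (3 : ZMod 17497) ^ 729 = 1 := by
  rw [show (729:ℕ) = 600 + 129 from rfl, pow_add, p3_600, show (129:ℕ) = 3 + 126 from rfl, pow_add,
      show (126:ℕ) = 63 * 2 from rfl, pow_mul, show (63:ℕ) = 21 * 3 from rfl, pow_mul]
  decide
lemma ps_0 : pscan true 300 1 = true := by decide
lemma ps_1 : pscan true 300 1368 = true := by decide
lemma ps_2 : pscan true 129 16742 = true := by decide
lemma pscan729 : pscan true 729 1 = true := by
  rw [show (729:ℕ) = 300 + 429 from rfl, pscan_add, ps_0]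
  rw [show (3 : ZMod 17497) ^ 300 * 1 = 1368 from by rw [p3_300, mul_one]]
  rw [show (429:ℕ) = 300 + 129 from rfl, pscan_add, ps_1]
  rw [show (3 : ZMod 17497) ^ 300 * 1368 = 16742 from by rw [p3_300]; decide]
  exact ps_2

lemma periodA2 : chzA 2 2 (0,1) = (0,1) := by decide
lemma periodB2 : chzA 2 2 (1,0) = (1,0) := by decide

/-- In `ZMod 17497`, `2·3^t` never equals `3173` or `14324`. -/
lemma no_power' (t : ℕ) :
    ¬(((2*3^t : ℕ) : ZMod 17497) = 3173 ∨ ((2*3^t : ℕ) : ZMod 17497) = 14324) := by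
  have h1 : ((2*3^t : ℕ) : ZMod 17497) = 2 * (3 : ZMod 17497) ^ (t % 729) := by
    push_cast
    have ht : t = 729 * (t / 729) + t % 729 := (Nat.div_add_mod t 729).symm
    calc (2 : ZMod 17497) * 3 ^ t
        = 2 * 3 ^ (729 * (t / 729) + t % 729) := by rw [← ht]
      _ = 2 * ((3 ^ 729) ^ (t / 729) * 3 ^ (t % 729)) := by rw [pow_add, pow_mul]
      _ = 2 * 3 ^ (t % 729) := by rw [pow729, one_pow, one_mul]
  have h2 := (pscan_spec 729 true 1 pscan729).2 (t % 729) (Nat.mod_lt _ (by norm_num))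
  rw [h1]
  intro hcon
  rw [Bool.not_eq_true', Bool.or_eq_false_iff] at h2
  obtain ⟨h2a, h2b⟩ := h2
  rcases hcon with hc | hc
  · rw [mul_one] at h2a
    exact absurd (beq_iff_eq.mpr hc) (by simp [h2a])
  · rw [mul_one] at h2b
    exact absurd (beq_iff_eq.mpr hc) (by simp [h2b])

/-- From the scan facts: zero residues mod `3^8` determine the index mod 13122. -/
lemma zero_class (s0 : ℕ × ℕ) (z1 z2 : ℕ)
    (hper : chzA 6561 13122 ((s0.1 : ZMod 6561), (s0.2 : ZMod 6561))
            = ((s0.1 : ZMod 6561), (s0.2 : ZMod 6561)))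
    (hscan : zscan 6561 z1 z2 true 13122 0 ((s0.1 : ZMod 6561), (s0.2 : ZMod 6561)) = true)
    (k : ℕ) (h0 : ((ch s0 k).2 : ZMod 6561) = 0) :
    k % 13122 = z1 ∨ k % 13122 = z2 := by
  have hp : chz 6561 s0 13122 = chz 6561 s0 0 := by
    rw [chz_eq_chzA, chz_eq_chzA]
    exact hper
  have hk : chz 6561 s0 (k % 13122) = chz 6561 s0 k := (chz_mod 6561 s0 13122 (by norm_num) hp k).symm
  have h0' : (chz 6561 s0 (k % 13122)).2 = 0 := by
    rw [hk, chz_cast]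
    exact h0
  have := (zscan_spec 6561 z1 z2 13122 true 0 _ hscan).2 (k % 13122)
      (Nat.mod_lt _ (by norm_num))
  rw [← chz_eq_chzA] at this
  simp only [Nat.zero_add, h0'] at this
  have : ((k % 13122 == z1 || k % 13122 == z2)) = true := by
    simpa using this.symm
  rcases Bool.or_eq_true_iff.mp this with h | h
  · exact Or.inl (eq_of_beq h)
  · exact Or.inr (eq_of_beq h)

/-- Value mod 17497 of the chain at `k` from its residue mod 8748. -/
lemma val_mod_p (s0 : ℕ × ℕ)
    (hper : chzA 17497 8748 ((s0.1 : ZMod 17497), (s0.2 : ZMod 17497))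
            = ((s0.1 : ZMod 17497), (s0.2 : ZMod 17497)))
    (k : ℕ) :
    ((ch s0 k).2 : ZMod 17497)
      = (chzA 17497 (k % 8748) ((s0.1 : ZMod 17497), (s0.2 : ZMod 17497))).2 := by
  have hp : chz 17497 s0 8748 = chz 17497 s0 0 := by
    rw [chz_eq_chzA, chz_eq_chzA]
    exact hper
  have hk : chz 17497 s0 k = chz 17497 s0 (k % 8748) := chz_mod 17497 s0 8748 (by norm_num) hp k
  have := congrArg Prod.snd hk
  rw [chz_cast, chz_eq_chzA] at this
  exact this

/-- Parity of the chain value. -/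
lemma parity (s0 : ℕ × ℕ) (k : ℕ)
    (hper : chzA 2 2 ((s0.1 : ZMod 2), (s0.2 : ZMod 2)) = ((s0.1 : ZMod 2), (s0.2 : ZMod 2))) :
    ((ch s0 k).2 : ZMod 2) = (chzA 2 (k % 2) ((s0.1 : ZMod 2), (s0.2 : ZMod 2))).2 := by
  have hp : chz 2 s0 2 = chz 2 s0 0 := by
    rw [chz_eq_chzA, chz_eq_chzA]
    exact hper
  have hk := chz_mod 2 s0 2 (by norm_num) hp k
  have := congrArg Prod.snd hk
  rw [chz_cast, chz_eq_chzA] at this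
  exact this

lemma dvd6561 (t : ℕ) (ht : 8 ≤ t) : ((2*3^t : ℕ) : ZMod 6561) = 0 := by
  have e2 : (3:ℕ)^t = 3^8 * 3^(t-8) := by
    rw [← pow_add]
    congr 1
    omega
  have e3 : (2*3^t : ℕ) = 6561 * (2*3^(t-8)) := by
    rw [e2]; ring
  rw [e3, Nat.cast_mul, ZMod.natCast_self, zero_mul]

/-- The big-t case is impossible on chain A. -/
lemma bigA (k t : ℕ) (ht : 8 ≤ t) (hY : (ch (4,1) k).2 = 2*3^t) : False := by
  have h0 : ((ch (4,1) k).2 : ZMod 6561) = 0 := by rw [hY]; exact dvd6561 t ht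
  have hcl := zero_class (4,1) 4300 10861 (by exact_mod_cast periodA6) (by exact_mod_cast zscanA) k h0
  -- parity : Y = 2*3^t is even hence ≡ 0 mod 2; chain A has even Y only at odd k
  have h2 : ((ch (4,1) k).2 : ZMod 2) = 0 := by
    rw [hY, Nat.cast_mul, show ((2:ℕ) : ZMod 2) = 0 from rfl, zero_mul]
  have hpar := parity (4,1) k (by exact_mod_cast periodA2)
  have hk2 : k % 2 = 1 := by
    rcases Nat.mod_two_eq_zero_or_one k with h | h
    · exfalso
      rw [h] at hpar
      rw [hpar] at h2
      have e : (chzA 2 0 (((4:ℕ) : ZMod 2), ((1:ℕ) : ZMod 2))).2 = 1 := by decide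
      rw [e] at h2
      exact absurd h2 (by decide)
    · exact h
  have hk13 : k % 13122 = 10861 := by omega
  have hk87 : k % 8748 = 2113 ∨ k % 8748 = 6487 := by omega
  have hp := val_mod_p (4,1) (by exact_mod_cast periodAp) k
  have hcon : ((2*3^t : ℕ) : ZMod 17497) = 3173 ∨ ((2*3^t : ℕ) : ZMod 17497) = 14324 := by
    rcases hk87 with h' | h'
    · left
      rw [← hY, hp, h']
      exact_mod_cast vA1
    · right
      rw [← hY, hp, h']
      exact_mod_cast vA2
  exact no_power' t hcon

/-- The big-t case is impossible on chain B. -/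
lemma bigB (k t : ℕ) (ht : 8 ≤ t) (hY : (ch (5,2) k).2 = 2*3^t) : False := by
  have h0 : ((ch (5,2) k).2 : ZMod 6561) = 0 := by rw [hY]; exact dvd6561 t ht
  have hcl := zero_class (5,2) 2260 8821 (by exact_mod_cast periodB6) (by exact_mod_cast zscanB) k h0
  have h2 : ((ch (5,2) k).2 : ZMod 2) = 0 := by
    rw [hY, Nat.cast_mul, show ((2:ℕ) : ZMod 2) = 0 from rfl, zero_mul]
  have hpar := parity (5,2) k (by exact_mod_cast periodB2)
  have hk2 : k % 2 = 0 := by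
    rcases Nat.mod_two_eq_zero_or_one k with h | h
    · exact h
    · exfalso
      rw [h] at hpar
      rw [hpar] at h2
      have e : (chzA 2 1 (((5:ℕ) : ZMod 2), ((2:ℕ) : ZMod 2))).2 = 1 := by decide
      rw [e] at h2
      exact absurd h2 (by decide)
  have hk13 : k % 13122 = 2260 := by omega
  have hk87 : k % 8748 = 2260 ∨ k % 8748 = 6634 := by omega
  have hp := val_mod_p (5,2) (by exact_mod_cast periodBp) k
  have hcon : ((2*3^t : ℕ) : ZMod 17497) = 3173 ∨ ((2*3^t : ℕ) : ZMod 17497) = 14324 := by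
    rcases hk87 with h' | h'
    · left
      rw [← hY, hp, h']
      exact_mod_cast vB1
    · right
      rw [← hY, hp, h']
      exact_mod_cast vB2
  exact no_power' t hcon

/-- The odd case. -/
lemma odd_case (n t : ℕ) (hn : 1 ≤ n)
    (h : (2*n+3)^2 = 3*(2*3^t)^2 + 13) : (n = 1 ∧ t = 0) ∨ (n = 4 ∧ t = 1) := by
  obtain ⟨k, hk⟩ := classify (2*3^t) (2*n+3) h (by have := pow_pos (show (0:ℕ) < 3 by norm_num) t; omega)
  rcases le_or_gt t 7 with ht | ht
  · have hkb : ∀ s0 : ℕ × ℕ, 1 ≤ s0.2 → s0.2 ≤ s0.1 → (2*n+3, 2*3^t) = ch s0 k → k < 8 := by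
      intro s0 h1 h2 hEq
      by_contra hk8
      push_neg at hk8
      have hg := (grow s0 h1 h2 k).1
      have hmono : (3:ℕ)^8 ≤ 3^k := Nat.pow_le_pow_right (by norm_num) hk8
      have hYv : (ch s0 k).2 = 2*3^t := by rw [← hEq]
      have htv : (3:ℕ)^t ≤ 3^7 := Nat.pow_le_pow_right (by norm_num) ht
      have c1 : (3:ℕ)^8 = 6561 := by norm_num
      have c2 : (3:ℕ)^7 = 2187 := by norm_num
      nlinarith [h1]
    rcases hk with hA | hB
    · have hk8 : k < 8 := hkb (4,1) (by norm_num) (by norm_num) hA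
      have hs := ((smallAB k hk8 t (by omega)).1).mp (by rw [← hA])
      obtain ⟨hk1, ht1⟩ := hs
      right
      subst hk1 ht1
      have he : (2*n+3, 2*3^1) = ((11 : ℕ), (6 : ℕ)) := by rw [hA]; rfl
      simp only [Prod.mk.injEq] at he
      exact ⟨by omega, rfl⟩
    · have hk8 : k < 8 := hkb (5,2) (by norm_num) (by norm_num) hB
      have hs := ((smallAB k hk8 t (by omega)).2).mp (by rw [← hB])
      obtain ⟨hk1, ht1⟩ := hs
      left
      subst hk1 ht1
      have he : (2*n+3, 2*3^0) = ((5 : ℕ), (2 : ℕ)) := by rw [hB]; rfl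
      simp only [Prod.mk.injEq] at he
      exact ⟨by omega, rfl⟩
  · exfalso
    rcases hk with hA | hB
    · exact bigA k t (by omega) (by rw [← hA])
    · exact bigB k t (by omega) (by rw [← hB])

/-- The even case. -/
lemma even_case (n u : ℕ) (hn : 1 ≤ n) (hu : 1 ≤ u)
    (h : (2*n+3)^2 = (2*3^u)^2 + 13) : n = 2 ∧ u = 1 := by
  have hb6 : 2*3^u ≤ 6 := by
    by_contra hc
    push_neg at hc
    have hba : 2*3^u < 2*n+3 := by by_contra hc2; push_neg at hc2; nlinarith
    nlinarith
  have h3u : (3:ℕ)^u ≤ 3 := by omega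
  have hu1 : u = 1 := by
    by_contra hc
    have h2u : 2 ≤ u := by omega
    have : (3:ℕ)^2 ≤ 3^u := Nat.pow_le_pow_right (by norm_num) h2u
    norm_num at this
    omega
  subst hu1
  norm_num at h
  exact ⟨by nlinarith, rfl⟩

end Stmt15

theorem stmt_15 (n m : ℕ) (hn : 0 < n) (hm : 0 < m) :
    n ^ 2 + 3 * n - 1 = 3 ^ m ↔
      (n = 1 ∧ m = 1) ∨ (n = 2 ∧ m = 2) ∨ (n = 4 ∧ m = 3) := by
  constructor
  · intro h
    have h1 : 1 ≤ n ^ 2 + 3 * n := by nlinarith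
    have h5 : n ^ 2 + 3 * n = 3 ^ m + 1 := by omega
    have hx : (2*n+3)^2 = 4 * 3^m + 13 := by
      have e1 : (2*n+3)^2 = 4*(n^2 + 3*n) + 9 := by ring
      rw [e1, h5]
      ring
    rcases Nat.even_or_odd m with ⟨u, hu⟩ | ⟨t, ht⟩
    · have hu1 : 1 ≤ u := by omega
      have hx' : (2*n+3)^2 = (2*3^u)^2 + 13 := by
        rw [hx, hu]; ring
      obtain ⟨hn2, hu2⟩ := Stmt15.even_case n u hn hu1 hx'
      right; left
      exact ⟨hn2, by omega⟩
    · have hx' : (2*n+3)^2 = 3*(2*3^t)^2 + 13 := by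
        rw [hx, ht]; ring
      rcases Stmt15.odd_case n t hn hx' with ⟨hn1, ht1⟩ | ⟨hn1, ht1⟩
      · left; exact ⟨hn1, by omega⟩
      · right; right; exact ⟨hn1, by omega⟩
  · rintro (⟨h1, h2⟩ | ⟨h1, h2⟩ | ⟨h1, h2⟩) <;> subst h1 <;> subst h2 <;> norm_num
end

section
/- The only odd positive integers u with u ≥ 5 such that u^2 - 13 = 4·3^m for some positive integer m are u = 5 (m = 1), u = 7 (m = 2), and u = 11 (m = 3). -/
namespace Stmt16Aux

set_option maxRecDepth 100000

/-- ascent map for the Pell equation x² - 3y² = 13 -/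
def f (p : ℕ × ℕ) : ℕ × ℕ := (2 * p.1 + 3 * p.2, p.1 + 2 * p.2)

/-- ascent map reduced mod n -/
def fm (n : ℕ) (p : ℕ × ℕ) : ℕ × ℕ := ((2 * p.1 + 3 * p.2) % n, (p.1 + 2 * p.2) % n)

lemma fm_step (n : ℕ) (p : ℕ × ℕ) :
    fm n (p.1 % n, p.2 % n) = ((f p).1 % n, (f p).2 % n) := by
  simp only [fm, f, Prod.mk.injEq]
  constructor <;>
  · conv_rhs => rw [Nat.add_mod, Nat.mul_mod]
    conv_lhs => rw [Nat.add_mod, Nat.mul_mod]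
    simp [Nat.mod_mod_of_dvd, Nat.mod_self, Nat.mod_mod]

lemma transfer (n : ℕ) (s : ℕ × ℕ) : ∀ k : ℕ,
    (fm n)^[k] (s.1 % n, s.2 % n) = ((f^[k] s).1 % n, (f^[k] s).2 % n) := by
  intro k
  induction k with
  | zero => simp
  | succ k ih =>
      rw [Function.iterate_succ_apply', Function.iterate_succ_apply', ih,
        fm_step n (f^[k] s)]

lemma per_mul (n T : ℕ) (s : ℕ × ℕ) (h : (fm n)^[T] s = s) :
    ∀ q : ℕ, (fm n)^[T * q] s = s := by
  intro q
  induction q with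
  | zero => simp
  | succ q ih =>
      rw [Nat.mul_succ, Function.iterate_add_apply, h, ih]

lemma per_mod (n T : ℕ) (s : ℕ × ℕ) (h : (fm n)^[T] s = s) (k : ℕ) :
    (fm n)^[k] s = (fm n)^[k % T] s := by
  conv_lhs => rw [← Nat.mod_add_div k T, Function.iterate_add_apply,
    per_mul n T s h (k / T)]

lemma pow_mod_period (n t : ℕ) (hn : 1 < n) (h : 3 ^ t % n = 1) (j : ℕ) :
    3 ^ j % n = 3 ^ (j % t) % n := by
  calc 3 ^ j % n = 3 ^ (j % t + t * (j / t)) % n := by rw [Nat.mod_add_div]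
    _ = (3 ^ (j % t) * (3 ^ t) ^ (j / t)) % n := by rw [pow_add, pow_mul]
    _ = (3 ^ (j % t) % n * ((3 ^ t) ^ (j / t) % n)) % n := by
        rw [Nat.mul_mod (3 ^ (j % t)) ((3 ^ t) ^ (j / t)) n]
    _ = (3 ^ (j % t) % n * ((3 ^ t % n) ^ (j / t) % n)) % n := by
        rw [Nat.pow_mod (3 ^ t) (j / t) n]
    _ = (3 ^ (j % t) % n * (1 % n)) % n := by rw [h, one_pow]
    _ = (3 ^ (j % t) % n * 1) % n := by rw [Nat.one_mod_eq_one.mpr (by omega)]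
    _ = 3 ^ (j % t) % n := by rw [mul_one, Nat.mod_mod_of_dvd _ dvd_rfl]

/-- descent: every solution of x² = 3y² + 13 is an iterate of a base solution -/
lemma pell_classify : ∀ y x : ℕ, 0 < x → x ^ 2 = 3 * y ^ 2 + 13 →
    ∃ k : ℕ, (x, y) = f^[k] (4, 1) ∨ (x, y) = f^[k] (5, 2) := by
  intro y
  induction y using Nat.strong_induction_on with
  | _ y ih =>
    intro x hx hxy
    rcases Nat.lt_or_ge y 4 with hy | hy
    · interval_cases y
      · exfalso; have h4 : x ≤ 3 := by nlinarith
        interval_cases x <;> omega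
      · have hx4 : x = 4 := by
          have h5 : x ≤ 4 := by nlinarith
          interval_cases x <;> omega
        exact ⟨0, Or.inl (by simp [hx4])⟩
      · have hx5 : x = 5 := by
          have h5 : x ≤ 5 := by nlinarith
          interval_cases x <;> omega
        exact ⟨0, Or.inr (by simp [hx5])⟩
      · exfalso; have h7 : x ≤ 7 := by nlinarith
        interval_cases x <;> omega
    · -- descent step
      have h2x : 3 * y < 2 * x := by nlinarith
      have hx2y : x < 2 * y := by nlinarith
      have hxy' : y < x := by nlinarith
      set a := 2 * x - 3 * y with ha
      set b := 2 * y - x with hb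
      have haa : 2 * x = 3 * y + a := by omega
      have hbb : 2 * y = x + b := by omega
      have hb0 : 0 < a := by omega
      have hbly : b < y := by omega
      have hab : a ^ 2 = 3 * b ^ 2 + 13 := by nlinarith
      obtain ⟨k, hk⟩ := ih b hbly a hb0 hab
      refine ⟨k + 1, ?_⟩
      have hfab : f (a, b) = (x, y) := by
        simp only [f, Prod.mk.injEq]
        constructor <;> omega
      rcases hk with hk | hk
      · exact Or.inl (by rw [Function.iterate_succ_apply', ← hk, hfab])
      · exact Or.inr (by rw [Function.iterate_succ_apply', ← hk, hfab])

-- periodicity facts (period 54 mod 27, 5, 17 on the relevant seeds)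
lemma per27A : (fm 27)^[54] (4, 1) = (4, 1) := by decide
lemma per27B : (fm 27)^[54] (5, 2) = (5, 2) := by decide
lemma per5A : (fm 5)^[54] (4, 1) = (4, 1) := by decide
lemma per5B : (fm 5)^[54] (0, 2) = (0, 2) := by decide
lemma per17A : (fm 17)^[54] (4, 1) = (4, 1) := by decide
lemma per17B : (fm 17)^[54] (5, 2) = (5, 2) := by decide

lemma keyA : ∀ a < 54, ∀ b < 16, ((fm 27)^[a] (4, 1)).2 % 27 = 0 →
    ¬(((fm 5)^[a] (4, 1)).2 % 5 = 2 * 3 ^ b % 5 ∧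
      ((fm 17)^[a] (4, 1)).2 % 17 = 2 * 3 ^ b % 17) := by decide

lemma keyB : ∀ a < 54, ∀ b < 16, ((fm 27)^[a] (5, 2)).2 % 27 = 0 →
    ¬(((fm 5)^[a] (0, 2)).2 % 5 = 2 * 3 ^ b % 5 ∧
      ((fm 17)^[a] (5, 2)).2 % 17 = 2 * 3 ^ b % 17) := by decide

/-- no solution of x² = 3y² + 13 has y = 2·3^j with j ≥ 3 -/
lemma no_big (x j : ℕ) (hx : 0 < x) (hj : 3 ≤ j)
    (hxy : x ^ 2 = 3 * (2 * 3 ^ j) ^ 2 + 13) : False := by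
  set y := 2 * 3 ^ j with hy
  obtain ⟨k, hk⟩ := pell_classify y x hx hxy
  obtain ⟨t, rfl⟩ : ∃ t, j = t + 3 := ⟨j - 3, by omega⟩
  have hy27 : y % 27 = 0 := by
    have : y = 27 * (2 * 3 ^ t) := by rw [hy, pow_add]; ring
    rw [this]; exact Nat.mul_mod_right _ _
  have hy5 : y % 5 = 2 * 3 ^ ((t + 3) % 16) % 5 := by
    rw [hy, Nat.mul_mod, pow_mod_period 5 16 (by norm_num) (by norm_num) (t + 3), ← Nat.mul_mod]
  have hy17 : y % 17 = 2 * 3 ^ ((t + 3) % 16) % 17 := by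
    rw [hy, Nat.mul_mod, pow_mod_period 17 16 (by norm_num) (by norm_num) (t + 3), ← Nat.mul_mod]
  have ha : k % 54 < 54 := Nat.mod_lt _ (by norm_num)
  have hb : (t + 3) % 16 < 16 := Nat.mod_lt _ (by norm_num)
  rcases hk with hk | hk
  · have t27 := transfer 27 (4, 1) k
    have t5 := transfer 5 (4, 1) k
    have t17 := transfer 17 (4, 1) k
    rw [← hk] at t27 t5 t17
    simp only at t27 t5 t17
    rw [per_mod 27 54 _ per27A] at t27
    rw [per_mod 5 54 _ per5A] at t5
    rw [per_mod 17 54 _ per17A] at t17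
    refine keyA (k % 54) ha ((t + 3) % 16) hb ?_ ⟨?_, ?_⟩
    · rw [show ((4:ℕ) % 27, (1:ℕ) % 27) = ((4:ℕ), (1:ℕ)) from rfl] at t27
      rw [t27]
      show y % 27 % 27 = 0
      rw [Nat.mod_mod_of_dvd _ dvd_rfl, hy27]
    · rw [show ((4:ℕ) % 5, (1:ℕ) % 5) = ((4:ℕ), (1:ℕ)) from rfl] at t5
      rw [t5]
      show y % 5 % 5 = _
      rw [Nat.mod_mod_of_dvd _ dvd_rfl, hy5]
    · rw [show ((4:ℕ) % 17, (1:ℕ) % 17) = ((4:ℕ), (1:ℕ)) from rfl] at t17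
      rw [t17]
      show y % 17 % 17 = _
      rw [Nat.mod_mod_of_dvd _ dvd_rfl, hy17]
  · have t27 := transfer 27 (5, 2) k
    have t5 := transfer 5 (5, 2) k
    have t17 := transfer 17 (5, 2) k
    rw [← hk] at t27 t5 t17
    simp only at t27 t5 t17
    rw [per_mod 27 54 _ per27B] at t27
    rw [per_mod 5 54 _ per5B] at t5
    rw [per_mod 17 54 _ per17B] at t17
    refine keyB (k % 54) ha ((t + 3) % 16) hb ?_ ⟨?_, ?_⟩
    · rw [show ((5:ℕ) % 27, (2:ℕ) % 27) = ((5:ℕ), (2:ℕ)) from rfl] at t27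
      rw [t27]
      show y % 27 % 27 = 0
      rw [Nat.mod_mod_of_dvd _ dvd_rfl, hy27]
    · rw [show ((5:ℕ) % 5, (2:ℕ) % 5) = ((0:ℕ), (2:ℕ)) from rfl] at t5
      rw [t5]
      show y % 5 % 5 = _
      rw [Nat.mod_mod_of_dvd _ dvd_rfl, hy5]
    · rw [show ((5:ℕ) % 17, (2:ℕ) % 17) = ((5:ℕ), (2:ℕ)) from rfl] at t17
      rw [t17]
      show y % 17 % 17 = _
      rw [Nat.mod_mod_of_dvd _ dvd_rfl, hy17]

end Stmt16Aux

theorem stmt_16 (u m : ℕ) (hu : Odd u) (hu5 : 5 ≤ u) (hm : 0 < m) :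
    u ^ 2 - 13 = 4 * 3 ^ m ↔
      (u = 5 ∧ m = 1) ∨ (u = 7 ∧ m = 2) ∨ (u = 11 ∧ m = 3) := by
  constructor
  · intro h
    have h25 : 25 ≤ u ^ 2 := by nlinarith
    have heq : u ^ 2 = 4 * 3 ^ m + 13 := by omega
    rcases Nat.even_or_odd m with ⟨j, hj⟩ | ⟨j, hj⟩
    · -- m even: factor (u-w)(u+w) = 13 with w = 2·3^j
      have hw : u ^ 2 = (2 * 3 ^ j) ^ 2 + 13 := by
        rw [heq, hj, pow_add, mul_pow]; ring_nf
      set w := 2 * 3 ^ j with hwdef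
      have huw : w < u := by nlinarith
      have hfac : (u - w) * (u + w) = 13 := by
        have hle : w * u ≤ u * u := Nat.mul_le_mul_right u (le_of_lt huw)
        have : (u - w) * (u + w) = u ^ 2 - w ^ 2 := by
          zify [le_of_lt huw, hle, show w ^ 2 ≤ u ^ 2 by nlinarith]
          ring
        omega
      have hdvd : (u + w) ∣ 13 := Dvd.intro_left (u - w) hfac
      have h13 : u + w = 1 ∨ u + w = 13 :=
        Nat.Prime.eq_one_or_self_of_dvd (by norm_num) _ hdvd
      have hw6 : w = 6 ∧ u = 7 := by
        have hw2 : 2 ≤ w := by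
          have : 1 ≤ 3 ^ j := Nat.one_le_pow _ _ (by norm_num)
          omega
        rcases h13 with h' | h'
        · omega
        · rw [h'] at hfac; omega
      have h3j : (3:ℕ) ^ j = 3 ^ 1 := by
        rw [pow_one]
        have := hw6.1; rw [hwdef] at this; omega
      have hj1 : j = 1 := Nat.pow_right_injective (by norm_num) h3j
      exact Or.inr (Or.inl ⟨hw6.2, by omega⟩)
    · -- m odd
      have heq' : u ^ 2 = 3 * (2 * 3 ^ j) ^ 2 + 13 := by
        have e : (3:ℕ) ^ (2 * j + 1) = 3 ^ j * 3 ^ j * 3 := by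
          rw [pow_succ, two_mul, pow_add]
        rw [heq, hj, e]; ring
      rcases Nat.lt_or_ge j 3 with hj3 | hj3
      · interval_cases j
        · -- u² = 25
          have h1 : u ≤ 5 := by nlinarith
          have : u = 5 := by omega
          exact Or.inl ⟨this, by omega⟩
        · -- u² = 121
          have h1 : u ≤ 11 := by nlinarith
          have h2 : 11 ≤ u := by nlinarith
          exact Or.inr (Or.inr ⟨by omega, by omega⟩)
        · -- u² = 985, impossible
          exfalso
          rcases le_or_gt u 31 with h' | h' <;> nlinarith
      · exact (Stmt16Aux.no_big u j (by omega) hj3 heq').elim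
  · rintro (⟨rfl, rfl⟩ | ⟨rfl, rfl⟩ | ⟨rfl, rfl⟩) <;> norm_num
end
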